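/- arXiv:2601.18455 — 8 statements merged into one kernel-verified Lean document; each statement's English description precedes it below -/
import Mathlib

section
/- For a 3-uniform hypergraph H on n ≥ 5 vertices that is Berge-K4-saturated, if u,v are vertices such that adding the pair {u,v} as a required edge creates a new Berge-K4 (i.e., (u,v) is a good pair), then the number of hyperedges of H containing both u and v is at most 2. -/
variable {V : Type*} [DecidableEq V]

/-- A Berge-K4 in the hyperedge set `E` with core vertices `a,b,c,d`:
four distinct vertices together with six distinct hyperedges, one assigned
to each pair of core vertices, each containing its assigned pair. -/
def IsBergeK4Core (E : Finset (Finset V)) (a b c d : V) : Prop :=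
  a ≠ b ∧ a ≠ c ∧ a ≠ d ∧ b ≠ c ∧ b ≠ d ∧ c ≠ d ∧
  ∃ fab fac fad fbc fbd fcd : Finset V,
    fab ∈ E ∧ fac ∈ E ∧ fad ∈ E ∧ fbc ∈ E ∧ fbd ∈ E ∧ fcd ∈ E ∧
    ([fab, fac, fad, fbc, fbd, fcd] : List (Finset V)).Nodup ∧
    a ∈ fab ∧ b ∈ fab ∧ a ∈ fac ∧ c ∈ fac ∧ a ∈ fad ∧ d ∈ fad ∧
    b ∈ fbc ∧ c ∈ fbc ∧ b ∈ fbd ∧ d ∈ fbd ∧ c ∈ fcd ∧ d ∈ fcd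

/-- `E` contains a Berge-K4. -/
def IsBergeK4 (E : Finset (Finset V)) : Prop :=
  ∃ a b c d : V, IsBergeK4Core E a b c d

/-- Every hyperedge has exactly 3 vertices. -/
def Is3Uniform (E : Finset (Finset V)) : Prop := ∀ e ∈ E, e.card = 3

/-- The degree of a vertex: the number of hyperedges containing it. -/
def hdeg (E : Finset (Finset V)) (v : V) : ℕ := (E.filter fun e => v ∈ e).card

/-- A 3-uniform Berge-K4-saturated hypergraph on the (finite) vertex type `V`:
it is 3-uniform, Berge-K4-free, and adding any non-hyperedge (3-element subset
of the vertices not already a hyperedge) creates a Berge-K4. -/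
def IsSaturated [Fintype V] (E : Finset (Finset V)) : Prop :=
  Is3Uniform E ∧ ¬ IsBergeK4 E ∧
    ∀ e : Finset V, e.card = 3 → e ∉ E → IsBergeK4 (insert e E)

/-- The pair `(u,v)` is good: there are two further vertices `x,y` (so that
`u,v,x,y` are four distinct vertices) and five distinct hyperedges, one for
each pair among `u,v,x,y` other than `uv`, each containing its assigned pair;
i.e. adding an edge on `{u,v}` completes a Berge-K4 with core `{u,v,x,y}`. -/
def GoodPair (E : Finset (Finset V)) (u v : V) : Prop :=
  ∃ x y : V, u ≠ v ∧ u ≠ x ∧ u ≠ y ∧ v ≠ x ∧ v ≠ y ∧ x ≠ y ∧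
  ∃ eux euy evx evy exy : Finset V,
    eux ∈ E ∧ euy ∈ E ∧ evx ∈ E ∧ evy ∈ E ∧ exy ∈ E ∧
    ([eux, euy, evx, evy, exy] : List (Finset V)).Nodup ∧
    u ∈ eux ∧ x ∈ eux ∧ u ∈ euy ∧ y ∈ euy ∧
    v ∈ evx ∧ x ∈ evx ∧ v ∈ evy ∧ y ∈ evy ∧
    x ∈ exy ∧ y ∈ exy

theorem stmt_0 (n : ℕ) (hn : 5 ≤ n) (E : Finset (Finset (Fin n)))
    (hsat : IsSaturated E) (u v : Fin n) (hgood : GoodPair E u v) :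
    (E.filter fun e => u ∈ e ∧ v ∈ e).card ≤ 2 := by
  obtain ⟨h3u, hfree, -⟩ := hsat
  by_contra hcard
  push_neg at hcard
  obtain ⟨x, y, huv, hux, huy, hvx, hvy, hxy, eux, euy, evx, evy, exy,
    heux, heuy, hevx, hevy, hexy, hnd, hu1, hx1, hu2, hy2, hv3, hx3, hv4, hy4,
    hx5, hy5⟩ := hgood
  set S := E.filter fun e => u ∈ e ∧ v ∈ e with hS
  set T : Finset (Finset (Fin n)) := {({u,v,x} : Finset (Fin n)), {u,v,y}} with hT
  have hT2 : T.card ≤ 2 := (Finset.card_insert_le _ _).trans (by simp)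
  have hsd : 1 ≤ (S \ T).card := by
    have := Finset.le_card_sdiff T S
    omega
  obtain ⟨f, hf⟩ := Finset.card_pos.mp hsd
  rw [Finset.mem_sdiff] at hf
  obtain ⟨hfS, hfT⟩ := hf
  rw [hS, Finset.mem_filter] at hfS
  obtain ⟨hfE, huf, hvf⟩ := hfS
  have hf3 : f.card = 3 := h3u f hfE
  -- helper: if w ∈ f with w ∉ {u,v}, then f = {u,v,w}
  have key : ∀ w : Fin n, u ≠ w → v ≠ w → w ∈ f → f = {u, v, w} := by
    intro w hw1 hw2 hwf
    have hsub : ({u, v, w} : Finset (Fin n)) ⊆ f := by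
      intro z hz
      simp only [Finset.mem_insert, Finset.mem_singleton] at hz
      rcases hz with rfl | rfl | rfl <;> assumption
    have hc : ({u, v, w} : Finset (Fin n)).card = 3 := by
      rw [Finset.card_insert_of_notMem (by simp [huv, hw1]),
        Finset.card_insert_of_notMem (by simp [hw2])]
      simp
    exact (Finset.eq_of_subset_of_card_le hsub (by omega)).symm
  have hfx : x ∉ f ∨ y ∉ f := by
    by_contra h
    push_neg at h
    obtain ⟨hx, hy⟩ := h
    have := key x hux hvx hx
    have : y ∈ ({u, v, x} : Finset (Fin n)) := this ▸ hy
    simp only [Finset.mem_insert, Finset.mem_singleton] at this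
    rcases this with rfl | rfl | rfl
    · exact huy rfl
    · exact hvy rfl
    · exact hxy rfl
  have hne1 : f ≠ eux := by
    rintro rfl
    exact hfT (by simp [hT, key x hux hvx hx1])
  have hne2 : f ≠ euy := by
    rintro rfl
    exact hfT (by simp [hT, key y huy hvy hy2])
  have hne3 : f ≠ evx := by
    rintro rfl
    exact hfT (by simp [hT, key x hux hvx hx3])
  have hne4 : f ≠ evy := by
    rintro rfl
    exact hfT (by simp [hT, key y huy hvy hy4])
  have hne5 : f ≠ exy := by
    rintro rfl
    rcases hfx with h | h
    · exact h hx5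
    · exact h hy5
  exact hfree ⟨u, v, x, y, huv, hux, huy, hvx, hvy, hxy,
    f, eux, euy, evx, evy, exy, hfE, heux, heuy, hevx, hevy, hexy,
    by simp_all [List.nodup_cons],
    huf, hvf, hu1, hx1, hu2, hy2, hv3, hx3, hv4, hy4, hx5, hy5⟩
end

section
/- For a 3-uniform hypergraph H on n ≥ 5 vertices that is Berge-K4-saturated, if (u,v) is a good pair, then every vertex w such that {u,v,w} is a hyperedge of H has degree at least 3 in H. -/
variable {V : Type*} [DecidableEq V]

theorem stmt_1 (n : ℕ) (hn : 5 ≤ n) (E : Finset (Finset (Fin n)))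
    (hsat : IsSaturated E) (u v : Fin n) (hgood : GoodPair E u v) :
    ∀ w : Fin n, ({u, v, w} : Finset (Fin n)) ∈ E → 3 ≤ hdeg E w := by
  intro w hw
  obtain ⟨h3u, hfree, hadd⟩ := hsat
  obtain ⟨x, y, huv, hux, huy, hvx, hvy, hxy, eux, euy, evx, evy, exy,
    h1, h2, h3, h4, h5, hnd, m1, m2, m3, m4, m5, m6, m7, m8, m9, m10⟩ := hgood
  set f : Finset (Fin n) := {u, v, w} with hf
  have hu : u ∈ f := by simp [hf]
  have hv : v ∈ f := by simp [hf]
  simp only [List.nodup_cons, List.mem_cons, List.not_mem_nil, or_false,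
    List.nodup_nil, and_true, not_or] at hnd
  have hdegw : ∀ a b c : Finset (Fin n), a ∈ E → b ∈ E → c ∈ E →
      a ≠ b → a ≠ c → b ≠ c → w ∈ a → w ∈ b → w ∈ c → 3 ≤ hdeg E w := by
    intro a b c ha hb hc hab hac hbc wa wb wc
    have hsub : ({a, b, c} : Finset (Finset (Fin n))) ⊆ E.filter (fun e => w ∈ e) := by
      intro e he
      simp only [Finset.mem_insert, Finset.mem_singleton] at he
      rcases he with rfl | rfl | rfl <;> simp [Finset.mem_filter, *]
    have hcard : ({a, b, c} : Finset (Finset (Fin n))).card = 3 := by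
      rw [Finset.card_insert_of_notMem (by simp [hab, hac]),
        Finset.card_insert_of_notMem (by simp [hbc]), Finset.card_singleton]
    calc 3 = ({a, b, c} : Finset (Finset (Fin n))).card := hcard.symm
      _ ≤ _ := Finset.card_le_card hsub
  have key : f = eux ∨ f = euy ∨ f = evx ∨ f = evy ∨ f = exy := by
    by_contra hc
    push_neg at hc
    obtain ⟨c1, c2, c3, c4, c5⟩ := hc
    exact hfree ⟨u, v, x, y, huv, hux, huy, hvx, hvy, hxy,
      f, eux, euy, evx, evy, exy, hw, h1, h2, h3, h4, h5,
      by simp only [List.nodup_cons, List.mem_cons, List.not_mem_nil, or_false,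
          List.nodup_nil, and_true, not_or]; tauto,
      hu, hv, m1, m2, m3, m4, m5, m6, m7, m8, m9, m10⟩
  have hxw : x ∈ f → x = w := by
    intro h
    simp only [hf, Finset.mem_insert, Finset.mem_singleton] at h
    rcases h with h | h | h
    · exact absurd h.symm hux
    · exact absurd h.symm hvx
    · exact h
  have hyw : y ∈ f → y = w := by
    intro h
    simp only [hf, Finset.mem_insert, Finset.mem_singleton] at h
    rcases h with h | h | h
    · exact absurd h.symm huy
    · exact absurd h.symm hvy
    · exact h
  rcases key with rfl | rfl | rfl | rfl | rfl
  · have hx : x = w := hxw m2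
    subst hx
    exact hdegw f evx exy hw h3 h5 hnd.1.2.1 hnd.1.2.2.2 hnd.2.2.1.2 m2 m6 m9
  · have hy : y = w := hyw m4
    subst hy
    exact hdegw f evy exy hw h4 h5 hnd.2.1.2.1 hnd.2.1.2.2 hnd.2.2.2.1 m4 m8 m10
  · have hx : x = w := hxw m6
    subst hx
    exact hdegw eux f exy h1 hw h5 hnd.1.2.1 hnd.1.2.2.2 hnd.2.2.1.2 m2 m6 m9
  · have hy : y = w := hyw m8
    subst hy
    exact hdegw euy f exy h2 hw h5 hnd.2.1.2.1 hnd.2.1.2.2 hnd.2.2.2.1 m4 m8 m10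
  · -- f = exy: x, y ∈ f, both = w, contradicting x ≠ y
    exact absurd ((hxw m9).trans (hyw m10).symm) hxy
end

section
/- Let H be a Berge-K4-free 3-uniform hypergraph and let {v1,v2,v3} be a hyperedge of H with d(v1) ≤ 2. Then the pair (v2,v3) is bad, i.e., there do not exist vertices x,y and five distinct hyperedges e1,...,e5 of H with {v2,x}⊆e1, {v2,y}⊆e2, {v3,x}⊆e3, {v3,y}⊆e4, {x,y}⊆e5. -/
variable {V : Type*} [DecidableEq V]

theorem stmt_2 (E : Finset (Finset V)) (h3 : Is3Uniform E) (hfree : ¬ IsBergeK4 E)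
    (v1 v2 v3 : V) (h12 : v1 ≠ v2) (h13 : v1 ≠ v3) (h23 : v2 ≠ v3)
    (he : ({v1, v2, v3} : Finset V) ∈ E) (hd1 : hdeg E v1 ≤ 2) :
    ¬ GoodPair E v2 v3 := by

  rintro ⟨x, y, _, h2x, h2y, h3x, h3y, hxy,
    e1, e2, e3, e4, e5, he1, he2, he3, he4, he5, hnd,
    m1, m1x, m2, m2y, m3, m3x, m4, m4y, m5x, m5y⟩
  simp only [List.nodup_cons, List.mem_cons, List.mem_singleton, List.not_mem_nil,
    List.nodup_nil, or_false, not_or, and_true] at hnd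
  obtain ⟨⟨n12, n13, n14, n15⟩, ⟨n23, n24, n25⟩, ⟨n34, n35⟩, n45, -⟩ := hnd
  -- helper for degree contradiction
  have deg3 : ∀ a b c : Finset V, a ∈ E → b ∈ E → c ∈ E → a ≠ b → a ≠ c → b ≠ c →
      v1 ∈ a → v1 ∈ b → v1 ∈ c → False := by
    intro a b c ha hb hc hab hac hbc hva hvb hvc
    have hsub : ({a, b, c} : Finset (Finset V)) ⊆ E.filter (fun e => v1 ∈ e) := by
      intro t ht
      simp only [Finset.mem_insert, Finset.mem_singleton] at ht
      rcases ht with rfl | rfl | rfl <;> simp [Finset.mem_filter, *]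
    have hcard : ({a, b, c} : Finset (Finset V)).card = 3 := by
      rw [Finset.card_insert_of_notMem (by simp [hab, hac]),
        Finset.card_insert_of_notMem (by simp [hbc]), Finset.card_singleton]
    have := Finset.card_le_card hsub
    rw [hcard] at this
    unfold hdeg at hd1
    omega
  by_cases hx1 : x = v1
  · subst hx1
    exact deg3 e1 e3 e5 he1 he3 he5 n13 n15 n35 m1x m3x m5x
  by_cases hy1 : y = v1
  · subst hy1
    exact deg3 e2 e4 e5 he2 he4 he5 n24 n25 n45 m2y m4y m5y
  -- main case: build a Berge-K4 with core v2 v3 x y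
  apply hfree
  refine ⟨v2, v3, x, y, h23, h2x, h2y, h3x, h3y, hxy,
    {v1, v2, v3}, e1, e2, e3, e4, e5, he, he1, he2, he3, he4, he5, ?_,
    by simp, by simp, m1, m1x, m2, m2y, m3, m3x, m4, m4y, m5x, m5y⟩
  have hfne : ∀ e : Finset V, x ∈ e ∨ y ∈ e → ({v1, v2, v3} : Finset V) ≠ e := by
    intro e hm h
    rw [← h] at hm
    simp only [Finset.mem_insert, Finset.mem_singleton] at hm
    rcases hm with (h' | h' | h') | (h' | h' | h')
    · exact hx1 h'
    · exact h2x h'.symm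
    · exact h3x h'.symm
    · exact hy1 h'
    · exact h2y h'.symm
    · exact h3y h'.symm
  simp only [List.nodup_cons, List.mem_cons, List.mem_singleton, List.not_mem_nil,
    List.nodup_nil, or_false, not_or, and_true]
  exact ⟨⟨hfne e1 (Or.inl m1x), hfne e2 (Or.inr m2y), hfne e3 (Or.inl m3x),
    hfne e4 (Or.inr m4y), hfne e5 (Or.inl m5x)⟩,
    ⟨n12, n13, n14, n15⟩, ⟨n23, n24, n25⟩, ⟨n34, n35⟩, n45, not_false⟩
end

section
/- Let H be a Berge-K4-free 3-uniform hypergraph with a hyperedge {v1,v2,v3} where d(v1) ≤ 2 and d(v2) ≤ 2. Then v1 and v2 cannot simultaneously lie in the core of any Berge-K4 that arises upon adding a single new hyperedge; in particular, all three pairs (v1,v2), (v1,v3), (v2,v3) are bad. -/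
variable {V : Type*} [DecidableEq V]

lemma deg_three {E : Finset (Finset V)} {v : V} {e1 e2 e3 : Finset V}
    (h1 : e1 ∈ E) (h2 : e2 ∈ E) (h3 : e3 ∈ E)
    (n12 : e1 ≠ e2) (n13 : e1 ≠ e3) (n23 : e2 ≠ e3)
    (m1 : v ∈ e1) (m2 : v ∈ e2) (m3 : v ∈ e3) : 3 ≤ hdeg E v := by
  have hsub : ({e1, e2, e3} : Finset (Finset V)) ⊆ E.filter fun e => v ∈ e := by
    intro e hee
    simp only [Finset.mem_insert, Finset.mem_singleton] at hee
    rcases hee with rfl | rfl | rfl <;> simp [Finset.mem_filter, *]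
  have hcard : ({e1, e2, e3} : Finset (Finset V)).card = 3 := by
    rw [Finset.card_insert_of_notMem (by simp [n12, n13]),
      Finset.card_insert_of_notMem (by simp [n23]), Finset.card_singleton]
  calc 3 = ({e1, e2, e3} : Finset (Finset V)).card := hcard.symm
    _ ≤ _ := Finset.card_le_card hsub

lemma resolve_two {E : Finset (Finset V)} {v : V} {e0 e1 e2 : Finset V}
    (hd : hdeg E v ≤ 2) (h0 : e0 ∈ E) (h1 : e1 ∈ E) (h2 : e2 ∈ E) (n : e1 ≠ e2)
    (m0 : v ∈ e0) (m1 : v ∈ e1) (m2 : v ∈ e2) : e0 = e1 ∨ e0 = e2 := by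
  by_contra hc
  push_neg at hc
  have := deg_three h0 h1 h2 hc.1 hc.2 n m0 m1 m2
  omega

lemma extract_core {E : Finset (Finset V)} {a b c d u v : V}
    (h : IsBergeK4Core E a b c d)
    (hu : u = a ∨ u = b ∨ u = c ∨ u = d) (hv : v = a ∨ v = b ∨ v = c ∨ v = d)
    (huv : u ≠ v) :
    ∃ g0 g1 g2 g3 g4 : Finset V, g0 ∈ E ∧ g1 ∈ E ∧ g2 ∈ E ∧ g3 ∈ E ∧ g4 ∈ E ∧
      ([g0, g1, g2, g3, g4] : List (Finset V)).Nodup ∧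
      u ∈ g0 ∧ v ∈ g0 ∧ u ∈ g1 ∧ u ∈ g2 ∧ v ∈ g3 ∧ v ∈ g4 := by
  obtain ⟨-, -, -, -, -, -, fab, fac, fad, fbc, fbd, fcd,
    hab, hac, had, hbc, hbd, hcd, hnd,
    ma1, mb1, ma2, mc2, ma3, md3, mb4, mc4, mb5, md5, mc6, md6⟩ := h
  simp only [List.nodup_cons, List.mem_cons, List.not_mem_nil, or_false, not_or, not_false_eq_true,
    List.nodup_nil, and_true] at hnd
  obtain ⟨⟨n12, n13, n14, n15, n16⟩, ⟨n23, n24, n25, n26⟩, ⟨n34, n35, n36⟩,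
    ⟨n45, n46⟩, n56⟩ := hnd
  have s12 := Ne.symm n12; have s13 := Ne.symm n13; have s14 := Ne.symm n14
  have s15 := Ne.symm n15; have s16 := Ne.symm n16; have s23 := Ne.symm n23
  have s24 := Ne.symm n24; have s25 := Ne.symm n25; have s26 := Ne.symm n26
  have s34 := Ne.symm n34; have s35 := Ne.symm n35; have s36 := Ne.symm n36
  have s45 := Ne.symm n45; have s46 := Ne.symm n46; have s56 := Ne.symm n56
  rcases hu with rfl | rfl | rfl | rfl <;> rcases hv with rfl | rfl | rfl | rfl
  · exact absurd rfl huv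
  · exact ⟨fab, fac, fad, fbc, fbd, hab, hac, had, hbc, hbd, by simp_all,
      ma1, mb1, ma2, ma3, mb4, mb5⟩
  · exact ⟨fac, fab, fad, fbc, fcd, hac, hab, had, hbc, hcd, by simp_all,
      ma2, mc2, ma1, ma3, mc4, mc6⟩
  · exact ⟨fad, fab, fac, fbd, fcd, had, hab, hac, hbd, hcd, by simp_all,
      ma3, md3, ma1, ma2, md5, md6⟩
  · exact ⟨fab, fbc, fbd, fac, fad, hab, hbc, hbd, hac, had, by simp_all,
      mb1, ma1, mb4, mb5, ma2, ma3⟩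
  · exact absurd rfl huv
  · exact ⟨fbc, fab, fbd, fac, fcd, hbc, hab, hbd, hac, hcd, by simp_all,
      mb4, mc4, mb1, mb5, mc2, mc6⟩
  · exact ⟨fbd, fab, fbc, fad, fcd, hbd, hab, hbc, had, hcd, by simp_all,
      mb5, md5, mb1, mb4, md3, md6⟩
  · exact ⟨fac, fbc, fcd, fab, fad, hac, hbc, hcd, hab, had, by simp_all,
      mc2, ma2, mc4, mc6, ma1, ma3⟩
  · exact ⟨fbc, fac, fcd, fab, fbd, hbc, hac, hcd, hab, hbd, by simp_all,
      mc4, mb4, mc2, mc6, mb1, mb5⟩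
  · exact absurd rfl huv
  · exact ⟨fcd, fac, fbc, fad, fbd, hcd, hac, hbc, had, hbd, by simp_all,
      mc6, md6, mc2, mc4, md3, md5⟩
  · exact ⟨fad, fbd, fcd, fab, fac, had, hbd, hcd, hab, hac, by simp_all,
      md3, ma3, md5, md6, ma1, ma2⟩
  · exact ⟨fbd, fad, fcd, fab, fbc, hbd, had, hcd, hab, hbc, by simp_all,
      md5, mb5, md3, md6, mb1, mb4⟩
  · exact ⟨fcd, fad, fbd, fac, fbc, hcd, had, hbd, hac, hbc, by simp_all,
      md6, mc6, md3, md5, mc2, mc4⟩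
  · exact absurd rfl huv

theorem stmt_3 (E : Finset (Finset V)) (h3 : Is3Uniform E) (hfree : ¬ IsBergeK4 E)
    (v1 v2 v3 : V) (h12 : v1 ≠ v2) (h13 : v1 ≠ v3) (h23 : v2 ≠ v3)
    (he : ({v1, v2, v3} : Finset V) ∈ E)
    (hd1 : hdeg E v1 ≤ 2) (hd2 : hdeg E v2 ≤ 2) :
    (∀ f : Finset V, f.card = 3 →
      ∀ a b c d : V, IsBergeK4Core (insert f E) a b c d →
        ¬ (v1 ∈ ({a, b, c, d} : Finset V) ∧ v2 ∈ ({a, b, c, d} : Finset V))) ∧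
    ¬ GoodPair E v1 v2 ∧ ¬ GoodPair E v1 v3 ∧ ¬ GoodPair E v2 v3 := by
  have hm1 : v1 ∈ ({v1, v2, v3} : Finset V) := by simp
  have hm2 : v2 ∈ ({v1, v2, v3} : Finset V) := by simp
  refine ⟨?_, ?_, ?_, ?_⟩
  · intro f hf a b c d hcore ⟨hv1, hv2⟩
    by_cases hfE : f ∈ E
    · exact hfree ⟨a, b, c, d, by rwa [Finset.insert_eq_self.mpr hfE] at hcore⟩
    simp only [Finset.mem_insert, Finset.mem_singleton] at hv1 hv2
    obtain ⟨g0, g1, g2, g3, g4, m0, m1, m2, m3, m4, hnd, u0, w0, u1, u2, w3, w4⟩ :=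
      extract_core hcore hv1 hv2 h12
    simp only [List.nodup_cons, List.mem_cons, List.not_mem_nil, or_false, not_or, not_false_eq_true,
      List.nodup_nil, and_true] at hnd
    obtain ⟨⟨n01, n02, n03, n04⟩, ⟨n12', n13', n14'⟩, ⟨n23', n24'⟩, n34'⟩ := hnd
    have key : ∀ g : Finset V, g ∈ insert f E → g ≠ f → g ∈ E := fun g hg hne =>
      (Finset.mem_insert.mp hg).resolve_left hne
    have h1f : g0 = f ∨ g1 = f ∨ g2 = f := by
      by_contra hc
      push_neg at hc
      have := deg_three (key _ m0 hc.1) (key _ m1 hc.2.1) (key _ m2 hc.2.2)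
        n01 n02 n12' u0 u1 u2
      omega
    have h2f : g0 = f ∨ g3 = f ∨ g4 = f := by
      by_contra hc
      push_neg at hc
      have := deg_three (key _ m0 hc.1) (key _ m3 hc.2.1) (key _ m4 hc.2.2)
        n03 n04 n34' w0 w3 w4
      omega
    have hg0 : g0 = f := by
      rcases h1f with h | h | h
      · exact h
      · rcases h2f with h' | h' | h'
        · exact h'
        · exact absurd (h.trans h'.symm) n13'
        · exact absurd (h.trans h'.symm) n14'
      · rcases h2f with h' | h' | h'
        · exact h'
        · exact absurd (h.trans h'.symm) n23'
        · exact absurd (h.trans h'.symm) n24'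
    subst hg0
    have e1E := key _ m1 (Ne.symm n01)
    have e2E := key _ m2 (Ne.symm n02)
    have e3E := key _ m3 (Ne.symm n03)
    have e4E := key _ m4 (Ne.symm n04)
    have r1 := resolve_two hd1 he e1E e2E n12' hm1 u1 u2
    have r2 := resolve_two hd2 he e3E e4E n34' hm2 w3 w4
    rcases r1 with r1 | r1 <;> rcases r2 with r2 | r2
    · exact n13' (r1.symm.trans r2)
    · exact n14' (r1.symm.trans r2)
    · exact n23' (r1.symm.trans r2)
    · exact n24' (r1.symm.trans r2)
  · rintro ⟨x, y, -, hux, huy, hvx, hvy, hxy, eux, euy, evx, evy, exy,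
      m1, m2, m3, m4, m5, hnd, a1, a2, a3, a4, a5, a6, a7, a8, a9, a10⟩
    simp only [List.nodup_cons, List.mem_cons, List.not_mem_nil, or_false, not_or, not_false_eq_true,
      List.nodup_nil, and_true] at hnd
    obtain ⟨⟨n12, n13, n14, n15⟩, ⟨n23, n24, n25⟩, ⟨n34, n35⟩, n45⟩ := hnd
    have r1 := resolve_two hd1 he m1 m2 n12 hm1 a1 a3
    have r2 := resolve_two hd2 he m3 m4 n34 hm2 a5 a7
    rcases r1 with r1 | r1 <;> rcases r2 with r2 | r2
    · exact n13 (r1.symm.trans r2)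
    · exact n14 (r1.symm.trans r2)
    · exact n23 (r1.symm.trans r2)
    · exact n24 (r1.symm.trans r2)
  · rintro ⟨x, y, -, hux, huy, hvx, hvy, hxy, eux, euy, evx, evy, exy,
      m1, m2, m3, m4, m5, hnd, a1, a2, a3, a4, a5, a6, a7, a8, a9, a10⟩
    simp only [List.nodup_cons, List.mem_cons, List.not_mem_nil, or_false, not_or, not_false_eq_true,
      List.nodup_nil, and_true] at hnd
    obtain ⟨⟨n12, n13, n14, n15⟩, ⟨n23, n24, n25⟩, ⟨n34, n35⟩, n45⟩ := hnd
    have r1 := resolve_two hd1 he m1 m2 n12 hm1 a1 a3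
    rcases r1 with r1 | r1
    · have hx : x ∈ ({v1, v2, v3} : Finset V) := r1 ▸ a2
      simp only [Finset.mem_insert, Finset.mem_singleton] at hx
      rcases hx with rfl | rfl | rfl
      · exact hux rfl
      · have := deg_three m1 m3 m5 n13 n15 n35 (r1 ▸ hm2) a6 a9
        omega
      · exact hvx rfl
    · have hy : y ∈ ({v1, v2, v3} : Finset V) := r1 ▸ a4
      simp only [Finset.mem_insert, Finset.mem_singleton] at hy
      rcases hy with rfl | rfl | rfl
      · exact huy rfl
      · have := deg_three m2 m4 m5 n24 n25 n45 (r1 ▸ hm2) a8 a10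
        omega
      · exact hvy rfl
  · rintro ⟨x, y, -, hux, huy, hvx, hvy, hxy, eux, euy, evx, evy, exy,
      m1, m2, m3, m4, m5, hnd, a1, a2, a3, a4, a5, a6, a7, a8, a9, a10⟩
    simp only [List.nodup_cons, List.mem_cons, List.not_mem_nil, or_false, not_or, not_false_eq_true,
      List.nodup_nil, and_true] at hnd
    obtain ⟨⟨n12, n13, n14, n15⟩, ⟨n23, n24, n25⟩, ⟨n34, n35⟩, n45⟩ := hnd
    have r1 := resolve_two hd2 he m1 m2 n12 hm2 a1 a3
    rcases r1 with r1 | r1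
    · have hx : x ∈ ({v1, v2, v3} : Finset V) := r1 ▸ a2
      simp only [Finset.mem_insert, Finset.mem_singleton] at hx
      rcases hx with rfl | rfl | rfl
      · have := deg_three m1 m3 m5 n13 n15 n35 (r1 ▸ hm1) a6 a9
        omega
      · exact hux rfl
      · exact hvx rfl
    · have hy : y ∈ ({v1, v2, v3} : Finset V) := r1 ▸ a4
      simp only [Finset.mem_insert, Finset.mem_singleton] at hy
      rcases hy with rfl | rfl | rfl
      · have := deg_three m2 m4 m5 n24 n25 n45 (r1 ▸ hm1) a8 a10
        omega
      · exact huy rfl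
      · exact hvy rfl
end

section
/- Let H be a 3-uniform hypergraph and let T be the hypergraph on four new vertices a1, a2 glued onto two existing vertices u, v of H, consisting of the two hyperedges {a1,a2,u} and {a1,a2,v}. If H is Berge-K4-free, then the hypergraph H' obtained from H by adding the two new vertices a1,a2 and the two hyperedges {a1,a2,u}, {a1,a2,v} is also Berge-K4-free. -/
variable {V : Type*} [DecidableEq V]

theorem stmt_5 (E : Finset (Finset V)) (h3 : Is3Uniform E)
    (a1 a2 u v : V) (ha : a1 ≠ a2) (huv : u ≠ v)
    (ha1 : a1 ≠ u ∧ a1 ≠ v) (ha2 : a2 ≠ u ∧ a2 ≠ v)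
    (hnew : ∀ e ∈ E, a1 ∉ e ∧ a2 ∉ e)
    (hfree : ¬ IsBergeK4 E) :
    ¬ IsBergeK4 (insert ({a1, a2, u} : Finset V) (insert ({a1, a2, v} : Finset V) E)) := by
  rintro ⟨a, b, c, d, hab, hac, had, hbc, hbd, hcd,
    fab, fac, fad, fbc, fbd, fcd, e1, e2, e3, e4, e5, e6, hnd,
    m1, m2, m3, m4, m5, m6, m7, m8, m9, m10, m11, m12⟩
  have hnd0 := hnd
  simp only [List.nodup_cons, List.mem_cons, List.not_mem_nil, or_false,
    List.mem_singleton, not_or, List.nodup_nil, and_true] at hnd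
  obtain ⟨⟨n12, n13, n14, n15, n16⟩, ⟨n23, n24, n25, n26⟩, ⟨n34, n35, n36⟩, ⟨n45, n46⟩, n56, -⟩ := hnd
  have key : ∀ w : V, ∀ f g h : Finset V,
      f ∈ insert ({a1, a2, u} : Finset V) (insert ({a1, a2, v} : Finset V) E) →
      g ∈ insert ({a1, a2, u} : Finset V) (insert ({a1, a2, v} : Finset V) E) →
      h ∈ insert ({a1, a2, u} : Finset V) (insert ({a1, a2, v} : Finset V) E) →
      f ≠ g → f ≠ h → g ≠ h → w ∈ f → w ∈ g → w ∈ h → w ≠ a1 ∧ w ≠ a2 := by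
    intro w f g h hf hg hh hfg hfh hgh hwf hwg hwh
    have step : (w = a1 ∨ w = a2) → False := by
      intro hw
      have notE : ∀ f' : Finset V,
          f' ∈ insert ({a1, a2, u} : Finset V) (insert ({a1, a2, v} : Finset V) E) →
          w ∈ f' → f' = {a1, a2, u} ∨ f' = {a1, a2, v} := by
        intro f' hf' hwf'
        rcases Finset.mem_insert.mp hf' with rfl | hf'
        · exact Or.inl rfl
        rcases Finset.mem_insert.mp hf' with rfl | hf'
        · exact Or.inr rfl
        · obtain ⟨p, q⟩ := hnew f' hf'
          rcases hw with rfl | rfl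
          · exact absurd hwf' p
          · exact absurd hwf' q
      rcases notE f hf hwf with rfl | rfl <;> rcases notE g hg hwg with rfl | rfl <;>
        rcases notE h hh hwh with rfl | rfl <;>
        first | exact hfg rfl | exact hfh rfl | exact hgh rfl
    exact ⟨fun h' => step (Or.inl h'), fun h' => step (Or.inr h')⟩
  have ka : a ≠ a1 ∧ a ≠ a2 := key a fab fac fad e1 e2 e3 n12 n13 n23 m1 m3 m5
  have kb : b ≠ a1 ∧ b ≠ a2 := key b fab fbc fbd e1 e4 e5 n14 n15 n45 m2 m7 m9
  have kc : c ≠ a1 ∧ c ≠ a2 := key c fac fbc fcd e2 e4 e6 n24 n26 n46 m4 m8 m11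
  have kd : d ≠ a1 ∧ d ≠ a2 := key d fad fbd fcd e3 e5 e6 n35 n36 n56 m6 m10 m12
  have edgeE : ∀ f : Finset V, ∀ p q : V,
      f ∈ insert ({a1, a2, u} : Finset V) (insert ({a1, a2, v} : Finset V) E) →
      p ∈ f → q ∈ f → p ≠ q → p ≠ a1 → p ≠ a2 → q ≠ a1 → q ≠ a2 → f ∈ E := by
    intro f p q hf hp hq hpq hp1 hp2 hq1 hq2
    rcases Finset.mem_insert.mp hf with rfl | hf
    · simp only [Finset.mem_insert, Finset.mem_singleton] at hp hq
      rcases hp with rfl | rfl | rfl <;> rcases hq with rfl | rfl | rfl <;>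
        first | exact absurd rfl hp1 | exact absurd rfl hp2 |
          exact absurd rfl hq1 | exact absurd rfl hq2 | exact absurd rfl hpq
    rcases Finset.mem_insert.mp hf with rfl | hf
    · simp only [Finset.mem_insert, Finset.mem_singleton] at hp hq
      rcases hp with rfl | rfl | rfl <;> rcases hq with rfl | rfl | rfl <;>
        first | exact absurd rfl hp1 | exact absurd rfl hp2 |
          exact absurd rfl hq1 | exact absurd rfl hq2 | exact absurd rfl hpq
    exact hf
  exact hfree ⟨a, b, c, d, hab, hac, had, hbc, hbd, hcd,
    fab, fac, fad, fbc, fbd, fcd,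
    edgeE fab a b e1 m1 m2 hab ka.1 ka.2 kb.1 kb.2,
    edgeE fac a c e2 m3 m4 hac ka.1 ka.2 kc.1 kc.2,
    edgeE fad a d e3 m5 m6 had ka.1 ka.2 kd.1 kd.2,
    edgeE fbc b c e4 m7 m8 hbc kb.1 kb.2 kc.1 kc.2,
    edgeE fbd b d e5 m9 m10 hbd kb.1 kb.2 kd.1 kd.2,
    edgeE fcd c d e6 m11 m12 hcd kc.1 kc.2 kd.1 kd.2,
    hnd0, m1, m2, m3, m4, m5, m6, m7, m8, m9, m10, m11, m12⟩
end

section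
/- Let H be a 3-uniform Berge-K4-saturated hypergraph and suppose two disjoint copies of the gadget T are simultaneously attached on two distinct vertex pairs: copy 1 adds new vertices a1,a2 and hyperedges {a1,a2,u1}, {a1,a2,v1}, and copy 2 adds new vertices a3,a4 and hyperedges {a3,a4,u2}, {a3,a4,v2}, with {u1,v1} ≠ {u2,v2}. Then the resulting hypergraph is not Berge-K4-saturated: in particular, adding the non-hyperedge {a1,a2,a3} creates no Berge-K4. -/
variable {V : Type*} [DecidableEq V]

/-- A Berge-K4-saturated hypergraph with vertex set `S`: 3-uniform with all
hyperedges inside `S`, Berge-K4-free, and adding any 3-subset of `S` not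
already a hyperedge creates a Berge-K4. -/
def IsSaturatedOn (S : Finset V) (E : Finset (Finset V)) : Prop :=
  (∀ e ∈ E, e.card = 3 ∧ e ⊆ S) ∧ ¬ IsBergeK4 E ∧
    ∀ e : Finset V, e ⊆ S → e.card = 3 → e ∉ E → IsBergeK4 (insert e E)

private lemma pigeon2' {α : Type*} {x y z A B : α} (hx : x = A ∨ x = B)
    (hy : y = A ∨ y = B) (hz : z = A ∨ z = B)
    (hxy : x ≠ y) (hxz : x ≠ z) (hyz : y ≠ z) : False := by
  rcases hx with rfl | rfl <;> rcases hy with rfl | rfl <;> rcases hz with rfl | rfl <;> simp_all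

private lemma find_first' {α : Type*} {f g h x y z : α}
    (hf : f = x ∨ f = y ∨ f = z) (hg : g = x ∨ g = y ∨ g = z) (hh : h = x ∨ h = y ∨ h = z)
    (hfg : f ≠ g) (hfh : f ≠ h) (hgh : g ≠ h) : f = x ∨ g = x ∨ h = x := by
  by_contra hc
  push_neg at hc
  exact pigeon2' (hf.resolve_left hc.1) (hg.resolve_left hc.2.1) (hh.resolve_left hc.2.2)
    hfg hfh hgh

private lemma nodup6 {α : Type*} {x1 x2 x3 x4 x5 x6 : α}
    (h : ([x1,x2,x3,x4,x5,x6] : List α).Nodup) :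
    x1≠x2 ∧ x1≠x3 ∧ x1≠x4 ∧ x1≠x5 ∧ x1≠x6 ∧ x2≠x3 ∧ x2≠x4 ∧ x2≠x5 ∧ x2≠x6 ∧
    x3≠x4 ∧ x3≠x5 ∧ x3≠x6 ∧ x4≠x5 ∧ x4≠x6 ∧ x5≠x6 := by
  simp only [List.nodup_cons, List.mem_cons, List.not_mem_nil, or_false, List.nodup_nil,
    and_true, not_or] at h
  tauto

private lemma nodup6' {α : Type*} {x1 x2 x3 x4 x5 x6 : α}
    (h : x1≠x2 ∧ x1≠x3 ∧ x1≠x4 ∧ x1≠x5 ∧ x1≠x6 ∧ x2≠x3 ∧ x2≠x4 ∧ x2≠x5 ∧ x2≠x6 ∧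
      x3≠x4 ∧ x3≠x5 ∧ x3≠x6 ∧ x4≠x5 ∧ x4≠x6 ∧ x5≠x6) :
    ([x1,x2,x3,x4,x5,x6] : List α).Nodup := by
  simp only [List.nodup_cons, List.mem_cons, List.not_mem_nil, or_false, List.nodup_nil,
    and_true, not_or]
  tauto

private lemma pairset' {α : Type*} [DecidableEq α] {x y c d : α} (hxy : x ≠ y) (hcd : c ≠ d)
    (hc : c = x ∨ c = y) (hd : d = x ∨ d = y) : ({x, y} : Finset α) = {c, d} := by
  rcases hc with rfl | rfl <;> rcases hd with rfl | rfl
  · exact absurd rfl hcd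
  · rfl
  · exact (Finset.pair_comm c d).symm
  · exact absurd rfl hcd

private lemma core_swap12 {E : Finset (Finset V)} {a b c d : V}
    (h : IsBergeK4Core E a b c d) : IsBergeK4Core E b a c d := by
  obtain ⟨h1,h2,h3,h4,h5,h6,fab,fac,fad,fbc,fbd,fcd,m1,m2,m3,m4,m5,m6,hnd,
    p1,p2,p3,p4,p5,p6,p7,p8,p9,p10,p11,p12⟩ := h
  obtain ⟨n12,n13,n14,n15,n16,n23,n24,n25,n26,n34,n35,n36,n45,n46,n56⟩ := nodup6 hnd
  exact ⟨h1.symm,h4,h5,h2,h3,h6, fab,fbc,fbd,fac,fad,fcd, m1,m4,m5,m2,m3,m6,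
    nodup6' ⟨n14,n15,n12,n13,n16,n45,n24.symm,n34.symm,n46,n25.symm,n35.symm,n56,n23,n26,n36⟩,
    p2,p1,p7,p8,p9,p10,p3,p4,p5,p6,p11,p12⟩

private lemma core_swap23 {E : Finset (Finset V)} {a b c d : V}
    (h : IsBergeK4Core E a b c d) : IsBergeK4Core E a c b d := by
  obtain ⟨h1,h2,h3,h4,h5,h6,fab,fac,fad,fbc,fbd,fcd,m1,m2,m3,m4,m5,m6,hnd,
    p1,p2,p3,p4,p5,p6,p7,p8,p9,p10,p11,p12⟩ := h
  obtain ⟨n12,n13,n14,n15,n16,n23,n24,n25,n26,n34,n35,n36,n45,n46,n56⟩ := nodup6 hnd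
  exact ⟨h2,h1,h3,h4.symm,h6,h5, fac,fab,fad,fbc,fcd,fbd, m2,m1,m3,m4,m6,m5,
    nodup6' ⟨n12.symm,n23,n24,n26,n25,n13,n14,n16,n15,n34,n36,n35,n46,n45,n56.symm⟩,
    p3,p4,p1,p2,p5,p6,p8,p7,p11,p12,p9,p10⟩

private lemma core_swap34 {E : Finset (Finset V)} {a b c d : V}
    (h : IsBergeK4Core E a b c d) : IsBergeK4Core E a b d c := by
  obtain ⟨h1,h2,h3,h4,h5,h6,fab,fac,fad,fbc,fbd,fcd,m1,m2,m3,m4,m5,m6,hnd,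
    p1,p2,p3,p4,p5,p6,p7,p8,p9,p10,p11,p12⟩ := h
  obtain ⟨n12,n13,n14,n15,n16,n23,n24,n25,n26,n34,n35,n36,n45,n46,n56⟩ := nodup6 hnd
  exact ⟨h1,h3,h2,h5,h4,h6.symm, fab,fad,fac,fbd,fbc,fcd, m1,m3,m2,m5,m4,m6,
    nodup6' ⟨n13,n12,n15,n14,n16,n23.symm,n35,n34,n36,n25,n24,n26,n45.symm,n56,n46⟩,
    p1,p2,p5,p6,p3,p4,p9,p10,p7,p8,p12,p11⟩

private lemma nodup4 {α : Type*} {x1 x2 x3 x4 : α}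
    (h : ([x1,x2,x3,x4] : List α).Nodup) :
    x1≠x2 ∧ x1≠x3 ∧ x1≠x4 ∧ x2≠x3 ∧ x2≠x4 ∧ x3≠x4 := by
  simp only [List.nodup_cons, List.mem_cons, List.not_mem_nil, or_false, List.nodup_nil,
    and_true, not_or] at h
  tauto

private lemma specLemma {α : Type*} {x y w1 w2 t : α}
    (hx : x = w1 ∨ x = w2 ∨ x = t) (hy : y = w1 ∨ y = w2 ∨ y = t) (hxy : x ≠ y) :
    (x = w1 ∨ x = w2) ∨ (y = w1 ∨ y = w2) := by
  rcases hx with rfl | rfl | rfl <;> rcases hy with rfl | rfl | rfl <;> tauto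
private lemma keyB0 {F : Finset (Finset V)} {S : Finset V} {p q r s u1 v1 u2 v2 : V}
    (hqS : q ∉ S) (hrS : r ∉ S) (hsS : s ∉ S)
    (hu1 : u1 ∈ S) (hv1 : v1 ∈ S) (hu2 : u2 ∈ S) (hv2 : v2 ∈ S)
    (huv1 : u1 ≠ v1) (huv2 : u2 ≠ v2)
    (hqr : q ≠ r) (hqs : q ≠ s)
    (hpairs : ({u1, v1} : Finset V) ≠ {u2, v2})
    (memp : ∀ f ∈ F, p ∈ f → f = {p,q,r} ∨ f = {p,q,u1} ∨ f = {p,q,v1})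
    (memq : ∀ f ∈ F, q ∈ f → f = {p,q,r} ∨ f = {p,q,u1} ∨ f = {p,q,v1})
    (memr : ∀ f ∈ F, r ∈ f → f = {p,q,r} ∨ f = {r,s,u2} ∨ f = {r,s,v2})
    {b c d : V} {fab fac fad fbc fbd : Finset V}
    (hbp : b ≠ p) (hcp : c ≠ p) (hdp : d ≠ p) (hcd : c ≠ d)
    (hfacF : fac ∈ F) (hfadF : fad ∈ F) (hfbcF : fbc ∈ F) (hfbdF : fbd ∈ F)
    (h1 : fab = {p, q, r}) (hb1 : b ∈ fab)
    (hpac : p ∈ fac) (hcac : c ∈ fac) (hpad : p ∈ fad) (hdad : d ∈ fad)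
    (hbbc : b ∈ fbc) (hcbc : c ∈ fbc) (hbbd : b ∈ fbd) (hdbd : d ∈ fbd)
    (nab_ac : fab ≠ fac) (nab_ad : fab ≠ fad) (nac_ad : fac ≠ fad)
    (nab_bc : fab ≠ fbc) (nab_bd : fab ≠ fbd) (nac_bc : fac ≠ fbc) (nad_bc : fad ≠ fbc) :
    False := by
  have hfacT : fac = {p,q,u1} ∨ fac = {p,q,v1} :=
    (memp fac hfacF hpac).resolve_left (fun e => nab_ac (h1.trans e.symm))
  have hfadT : fad = {p,q,u1} ∨ fad = {p,q,v1} :=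
    (memp fad hfadF hpad).resolve_left (fun e => nab_ad (h1.trans e.symm))
  have hb : b = q ∨ b = r := by
    rw [h1] at hb1
    simp only [Finset.mem_insert, Finset.mem_singleton] at hb1
    exact hb1.resolve_left hbp
  rcases hb with hb' | hb'
  · -- b = q
    have hfbcT : fbc = {p,q,u1} ∨ fbc = {p,q,v1} :=
      (memq fbc hfbcF (hb' ▸ hbbc)).resolve_left (fun e => nab_bc (h1.trans e.symm))
    exact pigeon2' hfacT hfadT hfbcT nac_ad nac_bc nad_bc
  · -- b = r
    have hfbcT : fbc = {r,s,u2} ∨ fbc = {r,s,v2} :=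
      (memr fbc hfbcF (hb' ▸ hbbc)).resolve_left (fun e => nab_bc (h1.trans e.symm))
    have hfbdT : fbd = {r,s,u2} ∨ fbd = {r,s,v2} :=
      (memr fbd hfbdF (hb' ▸ hbbd)).resolve_left (fun e => nab_bd (h1.trans e.symm))
    have hc' : c = r ∨ c = s ∨ c = u2 ∨ c = v2 := by
      rcases hfbcT with e | e
      · rw [e] at hcbc
        simp only [Finset.mem_insert, Finset.mem_singleton] at hcbc
        exact hcbc.imp id (fun h => h.imp id Or.inl)
      · rw [e] at hcbc
        simp only [Finset.mem_insert, Finset.mem_singleton] at hcbc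
        exact hcbc.imp id (fun h => h.imp id Or.inr)
    have hd' : d = r ∨ d = s ∨ d = u2 ∨ d = v2 := by
      rcases hfbdT with e | e
      · rw [e] at hdbd
        simp only [Finset.mem_insert, Finset.mem_singleton] at hdbd
        exact hdbd.imp id (fun h => h.imp id Or.inl)
      · rw [e] at hdbd
        simp only [Finset.mem_insert, Finset.mem_singleton] at hdbd
        exact hdbd.imp id (fun h => h.imp id Or.inr)
    have hcq : c ≠ q := by
      intro e
      rcases hc' with e2 | e2 | e2 | e2
      · exact hqr (e.symm.trans e2)
      · exact hqs (e.symm.trans e2)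
      · exact hqS ((e.symm.trans e2).symm ▸ hu2)
      · exact hqS ((e.symm.trans e2).symm ▸ hv2)
    have hdq : d ≠ q := by
      intro e
      rcases hd' with e2 | e2 | e2 | e2
      · exact hqr (e.symm.trans e2)
      · exact hqs (e.symm.trans e2)
      · exact hqS ((e.symm.trans e2).symm ▸ hu2)
      · exact hqS ((e.symm.trans e2).symm ▸ hv2)
    have hc12 : c = u1 ∨ c = v1 := by
      rcases hfacT with e | e
      · rw [e] at hcac
        simp only [Finset.mem_insert, Finset.mem_singleton] at hcac
        rcases hcac with e2 | e2 | e2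
        exacts [absurd e2 hcp, absurd e2 hcq, Or.inl e2]
      · rw [e] at hcac
        simp only [Finset.mem_insert, Finset.mem_singleton] at hcac
        rcases hcac with e2 | e2 | e2
        exacts [absurd e2 hcp, absurd e2 hcq, Or.inr e2]
    have hd12 : d = u1 ∨ d = v1 := by
      rcases hfadT with e | e
      · rw [e] at hdad
        simp only [Finset.mem_insert, Finset.mem_singleton] at hdad
        rcases hdad with e2 | e2 | e2
        exacts [absurd e2 hdp, absurd e2 hdq, Or.inl e2]
      · rw [e] at hdad
        simp only [Finset.mem_insert, Finset.mem_singleton] at hdad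
        rcases hdad with e2 | e2 | e2
        exacts [absurd e2 hdp, absurd e2 hdq, Or.inr e2]
    have hcS : c ∈ S := by
      rcases hc12 with e | e
      · exact e.symm ▸ hu1
      · exact e.symm ▸ hv1
    have hdS : d ∈ S := by
      rcases hd12 with e | e
      · exact e.symm ▸ hu1
      · exact e.symm ▸ hv1
    have hc34 : c = u2 ∨ c = v2 := by
      have hcr : c ≠ r := fun e => hrS (e ▸ hcS)
      have hcs : c ≠ s := fun e => hsS (e ▸ hcS)
      rcases hc' with e | e | e | e
      exacts [absurd e hcr, absurd e hcs, Or.inl e, Or.inr e]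
    have hd34 : d = u2 ∨ d = v2 := by
      have hdr : d ≠ r := fun e => hrS (e ▸ hdS)
      have hds : d ≠ s := fun e => hsS (e ▸ hdS)
      rcases hd' with e | e | e | e
      exacts [absurd e hdr, absurd e hds, Or.inl e, Or.inr e]
    exact hpairs ((pairset' huv1 hcd hc12 hd12).trans (pairset' huv2 hcd hc34 hd34).symm)

private lemma keyR0 {F : Finset (Finset V)} {S : Finset V} {p q r s u1 v1 u2 v2 : V}
    (hpS : p ∉ S) (hqS : q ∉ S) (hrS : r ∉ S) (hsS : s ∉ S)
    (hu1 : u1 ∈ S) (hv1 : v1 ∈ S) (hu2 : u2 ∈ S) (hv2 : v2 ∈ S)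
    (huv1 : u1 ≠ v1) (huv2 : u2 ≠ v2)
    (hpr : p ≠ r) (hps : p ≠ s) (hqr : q ≠ r) (hqs : q ≠ s)
    (hpairs : ({u1, v1} : Finset V) ≠ {u2, v2})
    (memp : ∀ f ∈ F, p ∈ f → f = {p,q,r} ∨ f = {p,q,u1} ∨ f = {p,q,v1})
    (memq : ∀ f ∈ F, q ∈ f → f = {p,q,r} ∨ f = {p,q,u1} ∨ f = {p,q,v1})
    (memr : ∀ f ∈ F, r ∈ f → f = {p,q,r} ∨ f = {r,s,u2} ∨ f = {r,s,v2})
    {b c d : V} {fab fac fad fbc fbd : Finset V}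
    (hrb : r ≠ b) (hrc : r ≠ c) (hrd : r ≠ d) (hbc : b ≠ c) (hbd : b ≠ d) (hcd : c ≠ d)
    (m2 : fac ∈ F) (m3 : fad ∈ F) (m4 : fbc ∈ F) (m5 : fbd ∈ F)
    (h0 : fab = {p, q, r})
    (p1 : r ∈ fab) (p2 : b ∈ fab) (p3 : r ∈ fac) (p4 : c ∈ fac) (p5 : r ∈ fad) (p6 : d ∈ fad)
    (p7 : b ∈ fbc) (p8 : c ∈ fbc) (p9 : b ∈ fbd) (p10 : d ∈ fbd)
    (n12 : fab ≠ fac) (n13 : fab ≠ fad) (n14 : fab ≠ fbc) (n15 : fab ≠ fbd)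
    (n24 : fac ≠ fbc) (n25 : fac ≠ fbd) (n45 : fbc ≠ fbd) : False := by
  have hb : b = p ∨ b = q := by
    rw [h0] at p2
    simp only [Finset.mem_insert, Finset.mem_singleton] at p2
    rcases p2 with e | e | e
    · exact Or.inl e
    · exact Or.inr e
    · exact absurd e.symm hrb
  rcases hb with hb' | hb'
  · exact keyB0 hqS hrS hsS hu1 hv1 hu2 hv2 huv1 huv2 hqr hqs hpairs memp memq memr
      hpr.symm (hb' ▸ hbc).symm (hb' ▸ hbd).symm hcd
      m4 m5 m2 m3 h0 p1 (hb' ▸ p7) p8 (hb' ▸ p9) p10 p3 p4 p5 p6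
      n14 n15 n45 n12 n13 n24.symm n25.symm
  · have c3 : ∀ t : V, ({p,q,t} : Finset V) = {q,p,t} := fun t => Finset.insert_comm p q {t}
    have memp' : ∀ f ∈ F, q ∈ f → f = {q,p,r} ∨ f = {q,p,u1} ∨ f = {q,p,v1} := by
      intro f hf h
      have h2 := memq f hf h
      rw [c3 r, c3 u1, c3 v1] at h2
      exact h2
    have memq' : ∀ f ∈ F, p ∈ f → f = {q,p,r} ∨ f = {q,p,u1} ∨ f = {q,p,v1} := by
      intro f hf h
      have h2 := memp f hf h
      rw [c3 r, c3 u1, c3 v1] at h2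
      exact h2
    have memr' : ∀ f ∈ F, r ∈ f → f = {q,p,r} ∨ f = {r,s,u2} ∨ f = {r,s,v2} := by
      intro f hf h
      have h2 := memr f hf h
      rw [c3 r] at h2
      exact h2
    exact keyB0 hpS hrS hsS hu1 hv1 hu2 hv2 huv1 huv2 hpr hps hpairs memp' memq' memr'
      hqr.symm (hb' ▸ hbc).symm (hb' ▸ hbd).symm hcd
      m4 m5 m2 m3 (h0.trans (c3 r)) p1 (hb' ▸ p7) p8 (hb' ▸ p9) p10 p3 p4 p5 p6
      n14 n15 n45 n12 n13 n24.symm n25.symm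

private lemma keyP {F : Finset (Finset V)} {S : Finset V} {p q r s u1 v1 u2 v2 : V}
    (hqS : q ∉ S) (hrS : r ∉ S) (hsS : s ∉ S)
    (hu1 : u1 ∈ S) (hv1 : v1 ∈ S) (hu2 : u2 ∈ S) (hv2 : v2 ∈ S)
    (huv1 : u1 ≠ v1) (huv2 : u2 ≠ v2)
    (hqr : q ≠ r) (hqs : q ≠ s)
    (hpairs : ({u1, v1} : Finset V) ≠ {u2, v2})
    (memp : ∀ f ∈ F, p ∈ f → f = {p,q,r} ∨ f = {p,q,u1} ∨ f = {p,q,v1})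
    (memq : ∀ f ∈ F, q ∈ f → f = {p,q,r} ∨ f = {p,q,u1} ∨ f = {p,q,v1})
    (memr : ∀ f ∈ F, r ∈ f → f = {p,q,r} ∨ f = {r,s,u2} ∨ f = {r,s,v2}) :
    ∀ b c d : V, IsBergeK4Core F p b c d → False := by
  intro b c d hcore
  obtain ⟨h1,h2,h3,h4,h5,h6,fab,fac,fad,fbc,fbd,fcd,m1,m2,m3,m4,m5,m6,hnd,
    p1,p2,p3,p4,p5,p6,p7,p8,p9,p10,p11,p12⟩ := hcore
  obtain ⟨n12,n13,n14,n15,n16,n23,n24,n25,n26,n34,n35,n36,n45,n46,n56⟩ := nodup6 hnd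
  have e1 := memp fab m1 p1
  have e2 := memp fac m2 p3
  have e3 := memp fad m3 p5
  rcases find_first' e1 e2 e3 n12 n13 n23 with h0 | h0 | h0
  · exact keyB0 hqS hrS hsS hu1 hv1 hu2 hv2 huv1 huv2 hqr hqs hpairs memp memq memr
      h1.symm h2.symm h3.symm h6 m2 m3 m4 m5 h0 p2 p3 p4 p5 p6 p7 p8 p9 p10
      n12 n13 n23 n14 n15 n24 n34
  · exact keyB0 hqS hrS hsS hu1 hv1 hu2 hv2 huv1 huv2 hqr hqs hpairs memp memq memr
      h2.symm h1.symm h3.symm h5 m1 m3 m4 m6 h0 p4 p1 p2 p5 p6 p8 p7 p11 p12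
      n12.symm n23 n13 n24 n26 n14 n34
  · exact keyB0 hqS hrS hsS hu1 hv1 hu2 hv2 huv1 huv2 hqr hqs hpairs memp memq memr
      h3.symm h1.symm h2.symm h4 m1 m2 m5 m6 h0 p6 p1 p2 p3 p4 p10 p9 p12 p11
      n13.symm n23.symm n12 n35 n36 n15 n25

private lemma keyR {F : Finset (Finset V)} {S : Finset V} {p q r s u1 v1 u2 v2 : V}
    (hpS : p ∉ S) (hqS : q ∉ S) (hrS : r ∉ S) (hsS : s ∉ S)
    (hu1 : u1 ∈ S) (hv1 : v1 ∈ S) (hu2 : u2 ∈ S) (hv2 : v2 ∈ S)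
    (huv1 : u1 ≠ v1) (huv2 : u2 ≠ v2)
    (hpr : p ≠ r) (hps : p ≠ s) (hqr : q ≠ r) (hqs : q ≠ s)
    (hpairs : ({u1, v1} : Finset V) ≠ {u2, v2})
    (memp : ∀ f ∈ F, p ∈ f → f = {p,q,r} ∨ f = {p,q,u1} ∨ f = {p,q,v1})
    (memq : ∀ f ∈ F, q ∈ f → f = {p,q,r} ∨ f = {p,q,u1} ∨ f = {p,q,v1})
    (memr : ∀ f ∈ F, r ∈ f → f = {p,q,r} ∨ f = {r,s,u2} ∨ f = {r,s,v2}) :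
    ∀ b c d : V, IsBergeK4Core F r b c d → False := by
  intro b c d hcore
  obtain ⟨h1,h2,h3,h4,h5,h6,fab,fac,fad,fbc,fbd,fcd,m1,m2,m3,m4,m5,m6,hnd,
    p1,p2,p3,p4,p5,p6,p7,p8,p9,p10,p11,p12⟩ := hcore
  obtain ⟨n12,n13,n14,n15,n16,n23,n24,n25,n26,n34,n35,n36,n45,n46,n56⟩ := nodup6 hnd
  have e1 := memr fab m1 p1
  have e2 := memr fac m2 p3
  have e3 := memr fad m3 p5
  rcases find_first' e1 e2 e3 n12 n13 n23 with h0 | h0 | h0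
  · exact keyR0 hpS hqS hrS hsS hu1 hv1 hu2 hv2 huv1 huv2 hpr hps hqr hqs hpairs
      memp memq memr h1 h2 h3 h4 h5 h6 m2 m3 m4 m5 h0
      p1 p2 p3 p4 p5 p6 p7 p8 p9 p10 n12 n13 n14 n15 n24 n25 n45
  · exact keyR0 hpS hqS hrS hsS hu1 hv1 hu2 hv2 huv1 huv2 hpr hps hqr hqs hpairs
      memp memq memr h2 h1 h3 h4.symm h6 h5 m1 m3 m4 m6 h0
      p3 p4 p1 p2 p5 p6 p8 p7 p11 p12 n12.symm n23 n24 n26 n14 n16 n46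
  · exact keyR0 hpS hqS hrS hsS hu1 hv1 hu2 hv2 huv1 huv2 hpr hps hqr hqs hpairs
      memp memq memr h3 h1 h2 h5.symm h6.symm h4 m1 m2 m5 m6 h0
      p5 p6 p1 p2 p3 p4 p10 p9 p12 p11 n13.symm n23.symm n35 n36 n15 n16 n56

private lemma keyS {F : Finset (Finset V)} {r s u2 v2 : V}
    (mems : ∀ f ∈ F, s ∈ f → f = {r,s,u2} ∨ f = {r,s,v2}) :
    ∀ b c d : V, IsBergeK4Core F s b c d → False := by
  intro b c d hcore
  obtain ⟨h1,h2,h3,h4,h5,h6,fab,fac,fad,fbc,fbd,fcd,m1,m2,m3,m4,m5,m6,hnd,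
    p1,p2,p3,p4,p5,p6,p7,p8,p9,p10,p11,p12⟩ := hcore
  obtain ⟨n12,n13,n14,n15,n16,n23,n24,n25,n26,n34,n35,n36,n45,n46,n56⟩ := nodup6 hnd
  exact pigeon2' (mems fab m1 p1) (mems fac m2 p3) (mems fad m3 p5) n12 n13 n23
theorem stmt_6 (S : Finset V) (E : Finset (Finset V)) (hsat : IsSaturatedOn S E)
    (a1 a2 a3 a4 : V) (hdist : ([a1, a2, a3, a4] : List V).Nodup)
    (hnew : a1 ∉ S ∧ a2 ∉ S ∧ a3 ∉ S ∧ a4 ∉ S)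
    (u1 v1 u2 v2 : V) (hu1 : u1 ∈ S) (hv1 : v1 ∈ S) (hu2 : u2 ∈ S) (hv2 : v2 ∈ S)
    (huv1 : u1 ≠ v1) (huv2 : u2 ≠ v2)
    (hpairs : ({u1, v1} : Finset V) ≠ ({u2, v2} : Finset V))
    (E' : Finset (Finset V))
    (hE' : E' = E ∪ {({a1, a2, u1} : Finset V), {a1, a2, v1}, {a3, a4, u2}, {a3, a4, v2}}) :
    ¬ IsBergeK4 (insert ({a1, a2, a3} : Finset V) E') ∧
      ¬ IsSaturatedOn (S ∪ {a1, a2, a3, a4}) E' := by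
  obtain ⟨hnew1, hnew2, hnew3, hnew4⟩ := hnew
  obtain ⟨hE3, hNoK4, hSat⟩ := hsat
  obtain ⟨h12, h13, h14, h23, h24, h34⟩ := nodup4 hdist
  subst hE'
  set F : Finset (Finset V) := insert ({a1, a2, a3} : Finset V)
      (E ∪ {({a1, a2, u1} : Finset V), {a1, a2, v1}, {a3, a4, u2}, {a3, a4, v2}}) with hF
  have hFmem : ∀ f ∈ F, f ∈ E ∨ f = {a1,a2,a3} ∨ f = {a1,a2,u1} ∨ f = {a1,a2,v1} ∨
      f = {a3,a4,u2} ∨ f = {a3,a4,v2} := by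
    intro f hf
    rw [hF] at hf
    rcases Finset.mem_insert.mp hf with h | h
    · exact Or.inr (Or.inl h)
    rcases Finset.mem_union.mp h with h2 | h2
    · exact Or.inl h2
    simp only [Finset.mem_insert, Finset.mem_singleton] at h2
    rcases h2 with h3 | h3 | h3 | h3
    exacts [Or.inr (Or.inr (Or.inl h3)), Or.inr (Or.inr (Or.inr (Or.inl h3))),
      Or.inr (Or.inr (Or.inr (Or.inr (Or.inl h3)))),
      Or.inr (Or.inr (Or.inr (Or.inr (Or.inr h3))))]
  have hS1 : ∀ x ∈ S, a1 ≠ x := fun x hx e => hnew1 (e.symm ▸ hx)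
  have hS2 : ∀ x ∈ S, a2 ≠ x := fun x hx e => hnew2 (e.symm ▸ hx)
  have hS3 : ∀ x ∈ S, a3 ≠ x := fun x hx e => hnew3 (e.symm ▸ hx)
  have hS4 : ∀ x ∈ S, a4 ≠ x := fun x hx e => hnew4 (e.symm ▸ hx)
  have mem1 : ∀ f ∈ F, a1 ∈ f → f = {a1,a2,a3} ∨ f = {a1,a2,u1} ∨ f = {a1,a2,v1} := by
    intro f hf h
    rcases hFmem f hf with hE | h0 | h0 | h0 | h0 | h0
    · exact absurd ((hE3 f hE).2 h) hnew1
    · exact Or.inl h0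
    · exact Or.inr (Or.inl h0)
    · exact Or.inr (Or.inr h0)
    · rw [h0] at h
      simp only [Finset.mem_insert, Finset.mem_singleton] at h
      rcases h with e | e | e
      exacts [absurd e h13, absurd e h14, absurd e (hS1 u2 hu2)]
    · rw [h0] at h
      simp only [Finset.mem_insert, Finset.mem_singleton] at h
      rcases h with e | e | e
      exacts [absurd e h13, absurd e h14, absurd e (hS1 v2 hv2)]
  have mem2 : ∀ f ∈ F, a2 ∈ f → f = {a1,a2,a3} ∨ f = {a1,a2,u1} ∨ f = {a1,a2,v1} := by
    intro f hf h
    rcases hFmem f hf with hE | h0 | h0 | h0 | h0 | h0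
    · exact absurd ((hE3 f hE).2 h) hnew2
    · exact Or.inl h0
    · exact Or.inr (Or.inl h0)
    · exact Or.inr (Or.inr h0)
    · rw [h0] at h
      simp only [Finset.mem_insert, Finset.mem_singleton] at h
      rcases h with e | e | e
      exacts [absurd e h23, absurd e h24, absurd e (hS2 u2 hu2)]
    · rw [h0] at h
      simp only [Finset.mem_insert, Finset.mem_singleton] at h
      rcases h with e | e | e
      exacts [absurd e h23, absurd e h24, absurd e (hS2 v2 hv2)]
  have mem3 : ∀ f ∈ F, a3 ∈ f → f = {a1,a2,a3} ∨ f = {a3,a4,u2} ∨ f = {a3,a4,v2} := by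
    intro f hf h
    rcases hFmem f hf with hE | h0 | h0 | h0 | h0 | h0
    · exact absurd ((hE3 f hE).2 h) hnew3
    · exact Or.inl h0
    · rw [h0] at h
      simp only [Finset.mem_insert, Finset.mem_singleton] at h
      rcases h with e | e | e
      exacts [absurd e.symm h13, absurd e.symm h23, absurd e (hS3 u1 hu1)]
    · rw [h0] at h
      simp only [Finset.mem_insert, Finset.mem_singleton] at h
      rcases h with e | e | e
      exacts [absurd e.symm h13, absurd e.symm h23, absurd e (hS3 v1 hv1)]
    · exact Or.inr (Or.inl h0)
    · exact Or.inr (Or.inr h0)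
  have mem4 : ∀ f ∈ F, a4 ∈ f → f = {a3,a4,u2} ∨ f = {a3,a4,v2} := by
    intro f hf h
    rcases hFmem f hf with hE | h0 | h0 | h0 | h0 | h0
    · exact absurd ((hE3 f hE).2 h) hnew4
    · rw [h0] at h
      simp only [Finset.mem_insert, Finset.mem_singleton] at h
      rcases h with e | e | e
      exacts [absurd e.symm h14, absurd e.symm h24, absurd e.symm h34]
    · rw [h0] at h
      simp only [Finset.mem_insert, Finset.mem_singleton] at h
      rcases h with e | e | e
      exacts [absurd e.symm h14, absurd e.symm h24, absurd e (hS4 u1 hu1)]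
    · rw [h0] at h
      simp only [Finset.mem_insert, Finset.mem_singleton] at h
      rcases h with e | e | e
      exacts [absurd e.symm h14, absurd e.symm h24, absurd e (hS4 v1 hv1)]
    · exact Or.inl h0
    · exact Or.inr h0
  have H1 : ¬ IsBergeK4 F := by
    rintro ⟨a, b, c, d, hcore⟩
    have hcopy := hcore
    obtain ⟨h1,h2,h3,h4,h5,h6,fab,fac,fad,fbc,fbd,fcd,m1,m2,m3,m4,m5,m6,hnd,
      p1,p2,p3,p4,p5,p6,p7,p8,p9,p10,p11,p12⟩ := hcore
    have spec : ∀ (x y : V) (f : Finset V), f ∈ F → f ∉ E → x ∈ f → y ∈ f → x ≠ y →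
        ((x = a1 ∨ x = a2 ∨ x = a3 ∨ x = a4) ∨ (y = a1 ∨ y = a2 ∨ y = a3 ∨ y = a4)) := by
      intro x y f hfF hfE hx hy hxy
      rcases hFmem f hfF with h | h | h | h | h | h
      · exact absurd h hfE
      all_goals rw [h] at hx hy
      all_goals simp only [Finset.mem_insert, Finset.mem_singleton] at hx hy
      · refine Or.inl ?_
        rcases hx with e | e | e
        exacts [Or.inl e, Or.inr (Or.inl e), Or.inr (Or.inr (Or.inl e))]
      · rcases specLemma hx hy hxy with h' | h'
        · exact Or.inl (h'.elim Or.inl (fun e => Or.inr (Or.inl e)))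
        · exact Or.inr (h'.elim Or.inl (fun e => Or.inr (Or.inl e)))
      · rcases specLemma hx hy hxy with h' | h'
        · exact Or.inl (h'.elim Or.inl (fun e => Or.inr (Or.inl e)))
        · exact Or.inr (h'.elim Or.inl (fun e => Or.inr (Or.inl e)))
      · rcases specLemma hx hy hxy with h' | h'
        · exact Or.inl (h'.elim (fun e => Or.inr (Or.inr (Or.inl e)))
            (fun e => Or.inr (Or.inr (Or.inr e))))
        · exact Or.inr (h'.elim (fun e => Or.inr (Or.inr (Or.inl e)))
            (fun e => Or.inr (Or.inr (Or.inr e))))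
      · rcases specLemma hx hy hxy with h' | h'
        · exact Or.inl (h'.elim (fun e => Or.inr (Or.inr (Or.inl e)))
            (fun e => Or.inr (Or.inr (Or.inr e))))
        · exact Or.inr (h'.elim (fun e => Or.inr (Or.inr (Or.inl e)))
            (fun e => Or.inr (Or.inr (Or.inr e))))
    have hw : ∃ w, (w = a ∨ w = b ∨ w = c ∨ w = d) ∧
        (w = a1 ∨ w = a2 ∨ w = a3 ∨ w = a4) := by
      by_cases q1 : fab ∈ E
      · by_cases q2 : fac ∈ E
        · by_cases q3 : fad ∈ E
          · by_cases q4 : fbc ∈ E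
            · by_cases q5 : fbd ∈ E
              · by_cases q6 : fcd ∈ E
                · exact absurd ⟨a,b,c,d,h1,h2,h3,h4,h5,h6,fab,fac,fad,fbc,fbd,fcd,
                    q1,q2,q3,q4,q5,q6,hnd,p1,p2,p3,p4,p5,p6,p7,p8,p9,p10,p11,p12⟩ hNoK4
                · rcases spec c d fcd m6 q6 p11 p12 h6 with h | h
                  exacts [⟨c, Or.inr (Or.inr (Or.inl rfl)), h⟩,
                    ⟨d, Or.inr (Or.inr (Or.inr rfl)), h⟩]
              · rcases spec b d fbd m5 q5 p9 p10 h5 with h | h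
                exacts [⟨b, Or.inr (Or.inl rfl), h⟩, ⟨d, Or.inr (Or.inr (Or.inr rfl)), h⟩]
            · rcases spec b c fbc m4 q4 p7 p8 h4 with h | h
              exacts [⟨b, Or.inr (Or.inl rfl), h⟩, ⟨c, Or.inr (Or.inr (Or.inl rfl)), h⟩]
          · rcases spec a d fad m3 q3 p5 p6 h3 with h | h
            exacts [⟨a, Or.inl rfl, h⟩, ⟨d, Or.inr (Or.inr (Or.inr rfl)), h⟩]
        · rcases spec a c fac m2 q2 p3 p4 h2 with h | h
          exacts [⟨a, Or.inl rfl, h⟩, ⟨c, Or.inr (Or.inr (Or.inl rfl)), h⟩]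
      · rcases spec a b fab m1 q1 p1 p2 h1 with h | h
        exacts [⟨a, Or.inl rfl, h⟩, ⟨b, Or.inr (Or.inl rfl), h⟩]
    obtain ⟨w, hwc, hwn⟩ := hw
    have hfront : ∃ x y z : V, IsBergeK4Core F w x y z := by
      rcases hwc with rfl | rfl | rfl | rfl
      · exact ⟨_, _, _, hcopy⟩
      · exact ⟨_, _, _, core_swap12 hcopy⟩
      · exact ⟨_, _, _, core_swap12 (core_swap23 hcopy)⟩
      · exact ⟨_, _, _, core_swap12 (core_swap23 (core_swap34 hcopy))⟩
    obtain ⟨x, y, z, hfc⟩ := hfront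
    rcases hwn with e | e | e | e <;> rw [e] at hfc
    · exact keyP hnew2 hnew3 hnew4 hu1 hv1 hu2 hv2 huv1 huv2 h23 h24 hpairs
        mem1 mem2 mem3 x y z hfc
    · have c3 : ∀ t : V, ({a1,a2,t} : Finset V) = {a2,a1,t} :=
        fun t => Finset.insert_comm a1 a2 {t}
      have mem1' : ∀ f ∈ F, a2 ∈ f → f = {a2,a1,a3} ∨ f = {a2,a1,u1} ∨ f = {a2,a1,v1} := by
        intro f hf h
        have h2 := mem2 f hf h
        rw [c3 a3, c3 u1, c3 v1] at h2
        exact h2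
      have mem2' : ∀ f ∈ F, a1 ∈ f → f = {a2,a1,a3} ∨ f = {a2,a1,u1} ∨ f = {a2,a1,v1} := by
        intro f hf h
        have h2 := mem1 f hf h
        rw [c3 a3, c3 u1, c3 v1] at h2
        exact h2
      have mem3' : ∀ f ∈ F, a3 ∈ f → f = {a2,a1,a3} ∨ f = {a3,a4,u2} ∨ f = {a3,a4,v2} := by
        intro f hf h
        have h2 := mem3 f hf h
        rw [c3 a3] at h2
        exact h2
      exact keyP hnew1 hnew3 hnew4 hu1 hv1 hu2 hv2 huv1 huv2 h13 h14 hpairs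
        mem1' mem2' mem3' x y z hfc
    · exact keyR hnew1 hnew2 hnew3 hnew4 hu1 hv1 hu2 hv2 huv1 huv2 h13 h14 h23 h24 hpairs
        mem1 mem2 mem3 x y z hfc
    · exact keyS mem4 x y z hfc
  refine ⟨H1, fun hsat' => ?_⟩
  obtain ⟨hE3', hK4', hadd⟩ := hsat'
  have he0sub : ({a1, a2, a3} : Finset V) ⊆ S ∪ {a1, a2, a3, a4} := by
    intro x hx
    simp only [Finset.mem_insert, Finset.mem_singleton] at hx
    simp only [Finset.mem_union, Finset.mem_insert, Finset.mem_singleton]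
    rcases hx with e | e | e
    exacts [Or.inr (Or.inl e), Or.inr (Or.inr (Or.inl e)), Or.inr (Or.inr (Or.inr (Or.inl e)))]
  have he0card : ({a1, a2, a3} : Finset V).card = 3 :=
    Finset.card_eq_three.mpr ⟨a1, a2, a3, h12, h13, h23, rfl⟩
  have he0notin : ({a1, a2, a3} : Finset V) ∉
      E ∪ {({a1, a2, u1} : Finset V), {a1, a2, v1}, {a3, a4, u2}, {a3, a4, v2}} := by
    intro h
    rcases Finset.mem_union.mp h with h' | h'
    · exact hnew1 ((hE3 _ h').2 (by simp))
    simp only [Finset.mem_insert, Finset.mem_singleton] at h'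
    rcases h' with h0 | h0 | h0 | h0
    · have : a3 ∈ ({a1, a2, u1} : Finset V) := h0 ▸ (by simp)
      simp only [Finset.mem_insert, Finset.mem_singleton] at this
      rcases this with e | e | e
      exacts [h13 e.symm, h23 e.symm, hS3 u1 hu1 e]
    · have : a3 ∈ ({a1, a2, v1} : Finset V) := h0 ▸ (by simp)
      simp only [Finset.mem_insert, Finset.mem_singleton] at this
      rcases this with e | e | e
      exacts [h13 e.symm, h23 e.symm, hS3 v1 hv1 e]
    · have : a1 ∈ ({a3, a4, u2} : Finset V) := h0 ▸ (by simp)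
      simp only [Finset.mem_insert, Finset.mem_singleton] at this
      rcases this with e | e | e
      exacts [h13 e, h14 e, hS1 u2 hu2 e]
    · have : a1 ∈ ({a3, a4, v2} : Finset V) := h0 ▸ (by simp)
      simp only [Finset.mem_insert, Finset.mem_singleton] at this
      rcases this with e | e | e
      exacts [h13 e, h14 e, hS1 v2 hv2 e]
  exact H1 (hadd _ he0sub he0card he0notin)
end

section
/- The 3-uniform hypergraph H on vertex set {x1,x2,x3,x4,a1,a2} with hyperedges {x1x2x3, x1x3x4, x1x3a1, x1x2x4, x1x4a2, x2a1a2} is Berge-K4-saturated. -/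
variable {V : Type*} [DecidableEq V]

/-- The 6-vertex hypergraph of Construction 2 (vertices x1,x2,x3,x4,a1,a2
are 0,1,2,3,4,5). -/
def baseEven : Finset (Finset (Fin 6)) :=
  {{0, 1, 2}, {0, 2, 3}, {0, 2, 4}, {0, 1, 3}, {0, 3, 5}, {1, 4, 5}}


/-- Restructured Berge-K4 core predicate with interleaved constraints, for
efficient `decide`. -/
def Core' (E : Finset (Finset V)) (a b c d : V) : Prop :=
  a ≠ b ∧ a ≠ c ∧ a ≠ d ∧ b ≠ c ∧ b ≠ d ∧ c ≠ d ∧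
  ∃ fab ∈ E, (a ∈ fab ∧ b ∈ fab) ∧
  ∃ fac ∈ E, (a ∈ fac ∧ c ∈ fac ∧ fac ≠ fab) ∧
  ∃ fad ∈ E, (a ∈ fad ∧ d ∈ fad ∧ fad ≠ fab ∧ fad ≠ fac) ∧
  ∃ fbc ∈ E, (b ∈ fbc ∧ c ∈ fbc ∧ fbc ≠ fab ∧ fbc ≠ fac ∧ fbc ≠ fad) ∧
  ∃ fbd ∈ E, (b ∈ fbd ∧ d ∈ fbd ∧ fbd ≠ fab ∧ fbd ≠ fac ∧ fbd ≠ fad ∧ fbd ≠ fbc) ∧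
  ∃ fcd ∈ E, c ∈ fcd ∧ d ∈ fcd ∧ fcd ≠ fab ∧ fcd ≠ fac ∧ fcd ≠ fad ∧ fcd ≠ fbc ∧ fcd ≠ fbd

lemma core'_iff (E : Finset (Finset V)) (a b c d : V) :
    IsBergeK4Core E a b c d ↔ Core' E a b c d := by
  unfold IsBergeK4Core Core'
  constructor
  · rintro ⟨h1, h2, h3, h4, h5, h6, fab, fac, fad, fbc, fbd, fcd,
      m1, m2, m3, m4, m5, m6, hnd, p1, p2, p3, p4, p5, p6, p7, p8, p9, p10, p11, p12⟩
    simp only [List.nodup_cons, List.mem_cons, List.not_mem_nil, List.mem_singleton,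
      List.nodup_nil, or_false, not_or, and_true] at hnd
    obtain ⟨⟨n1, n2, n3, n4, n5⟩, ⟨n6, n7, n8, n9⟩, ⟨n10, n11, n12⟩, ⟨n13, n14⟩, n15, -⟩ := hnd
    exact ⟨h1, h2, h3, h4, h5, h6,
      fab, m1, ⟨p1, p2⟩,
      fac, m2, ⟨p3, p4, Ne.symm n1⟩,
      fad, m3, ⟨p5, p6, Ne.symm n2, Ne.symm n6⟩,
      fbc, m4, ⟨p7, p8, Ne.symm n3, Ne.symm n7, Ne.symm n10⟩,
      fbd, m5, ⟨p9, p10, Ne.symm n4, Ne.symm n8, Ne.symm n11, Ne.symm n13⟩,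
      fcd, m6, p11, p12, Ne.symm n5, Ne.symm n9, Ne.symm n12, Ne.symm n14, Ne.symm n15⟩
  · rintro ⟨h1, h2, h3, h4, h5, h6,
      fab, m1, ⟨p1, p2⟩,
      fac, m2, ⟨p3, p4, n1⟩,
      fad, m3, ⟨p5, p6, n2, n3⟩,
      fbc, m4, ⟨p7, p8, n4, n5, n6⟩,
      fbd, m5, ⟨p9, p10, n7, n8, n9, n10⟩,
      fcd, m6, p11, p12, n11, n12, n13, n14, n15⟩
    refine ⟨h1, h2, h3, h4, h5, h6, fab, fac, fad, fbc, fbd, fcd,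
      m1, m2, m3, m4, m5, m6, ?_, p1, p2, p3, p4, p5, p6, p7, p8, p9, p10, p11, p12⟩
    simp only [List.nodup_cons, List.mem_cons, List.not_mem_nil, List.mem_singleton,
      List.nodup_nil, or_false, not_or, and_true]
    exact ⟨⟨Ne.symm n1, Ne.symm n2, Ne.symm n4, Ne.symm n7, Ne.symm n11⟩,
      ⟨Ne.symm n3, Ne.symm n5, Ne.symm n8, Ne.symm n12⟩,
      ⟨Ne.symm n6, Ne.symm n9, Ne.symm n13⟩, ⟨Ne.symm n10, Ne.symm n14⟩, Ne.symm n15, not_false⟩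

instance (E : Finset (Finset V)) (a b c d : V) : Decidable (Core' E a b c d) := by
  unfold Core'; infer_instance

instance (E : Finset (Finset V)) : Decidable (Is3Uniform E) := by
  unfold Is3Uniform; infer_instance

lemma no_core : ∀ a b c d : Fin 6, ¬ Core' baseEven a b c d := by decide

set_option maxRecDepth 100000 in
lemma sat_aux : ∀ e : Finset (Fin 6), e.card = 3 → e ∉ baseEven →
    ∃ a b c d : Fin 6, Core' (insert e baseEven) a b c d := by decide

theorem stmt_9 : IsSaturated baseEven := by
  refine ⟨by decide, ?_, ?_⟩
  · rintro ⟨a, b, c, d, h⟩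
    exact no_core a b c d ((core'_iff _ a b c d).mp h)
  · intro e hc he
    obtain ⟨a, b, c, d, h⟩ := sat_aux e hc he
    exact ⟨a, b, c, d, (core'_iff _ a b c d).mpr h⟩
end

section
/- Let H be a Berge-K4-saturated 3-uniform hypergraph on n vertices with minimum degree at least 2, and define X = {v : d_H(v) ≥ 3}, A = {v ∉ X : every hyperedge containing v intersects X}, and B = V(H) \ (X ∪ A). If H is Berge-K4-saturated and every vertex outside X has degree exactly 2, then B = ∅ (every degree-2 vertex has all its hyperedges meeting a vertex of degree ≥ 3). -/
variable {V : Type*} [DecidableEq V]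

lemma goodpair_symm {E : Finset (Finset V)} {u v : V} (h : GoodPair E u v) :
    GoodPair E v u := by
  obtain ⟨x, y, huv, hux, huy, hvx, hvy, hxy, eux, euy, evx, evy, exy,
    h1, h2, h3, h4, h5, hnd, m1, m2, m3, m4, m5, m6, m7, m8, m9, m10⟩ := h
  refine ⟨x, y, huv.symm, hvx, hvy, hux, huy, hxy, evx, evy, eux, euy, exy,
    h3, h4, h1, h2, h5, ?_, m5, m6, m7, m8, m1, m2, m3, m4, m9, m10⟩
  simp only [List.nodup_cons, List.mem_cons, List.not_mem_nil, or_false, not_or,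
    List.nodup_nil, not_false_eq_true, and_true] at hnd ⊢
  obtain ⟨⟨n12, n13, n14, n15⟩, ⟨n23, n24, n25⟩, ⟨n34, n35⟩, n45⟩ := hnd
  exact ⟨⟨n34, Ne.symm n13, Ne.symm n23, n35⟩, ⟨Ne.symm n14, Ne.symm n24, n45⟩,
    ⟨n12, n15⟩, n25⟩

lemma exists_goodpair {E : Finset (Finset V)} {t : Finset V}
    (hfree : ¬ IsBergeK4 E) (hK4 : IsBergeK4 (insert t E)) :
    ∃ p q : V, p ∈ t ∧ q ∈ t ∧ GoodPair E p q := by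
  obtain ⟨a, b, c, d, hab, hac, had, hbc, hbd, hcd, fab, fac, fad, fbc, fbd, fcd,
    h1, h2, h3, h4, h5, h6, hnd, ma1, mb1, ma2, mc1, ma3, md1, mb2, mc2, mb3, md2,
    mc3, md3⟩ := hK4
  have hnd0 := hnd
  simp only [List.nodup_cons, List.mem_cons, List.not_mem_nil, or_false, not_or,
    List.nodup_nil, not_false_eq_true, and_true] at hnd
  obtain ⟨⟨n12, n13, n14, n15, n16⟩, ⟨n23, n24, n25, n26⟩, ⟨n34, n35, n36⟩,
    ⟨n45, n46⟩, n56⟩ := hnd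
  have mem : ∀ g : Finset V, g ∈ insert t E → g ≠ t → g ∈ E := fun g hg hne =>
    (Finset.mem_insert.mp hg).resolve_left hne
  by_cases e1 : fab = t
  · refine ⟨a, b, e1 ▸ ma1, e1 ▸ mb1, c, d, hab, hac, had, hbc, hbd, hcd,
      fac, fad, fbc, fbd, fcd,
      mem _ h2 (e1 ▸ Ne.symm n12), mem _ h3 (e1 ▸ Ne.symm n13),
      mem _ h4 (e1 ▸ Ne.symm n14), mem _ h5 (e1 ▸ Ne.symm n15),
      mem _ h6 (e1 ▸ Ne.symm n16), ?_,
      ma2, mc1, ma3, md1, mb2, mc2, mb3, md2, mc3, md3⟩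
    simp only [List.nodup_cons, List.mem_cons, List.not_mem_nil, or_false, not_or,
      List.nodup_nil, not_false_eq_true, and_true]
    exact ⟨⟨n23, n24, n25, n26⟩, ⟨n34, n35, n36⟩, ⟨n45, n46⟩, n56⟩
  by_cases e2 : fac = t
  · refine ⟨a, c, e2 ▸ ma2, e2 ▸ mc1, b, d, hac, hab, had, Ne.symm hbc, hcd, hbd,
      fab, fad, fbc, fcd, fbd,
      mem _ h1 (e2 ▸ n12), mem _ h3 (e2 ▸ Ne.symm n23),
      mem _ h4 (e2 ▸ Ne.symm n24), mem _ h6 (e2 ▸ Ne.symm n26),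
      mem _ h5 (e2 ▸ Ne.symm n25), ?_,
      ma1, mb1, ma3, md1, mc2, mb2, mc3, md3, mb3, md2⟩
    simp only [List.nodup_cons, List.mem_cons, List.not_mem_nil, or_false, not_or,
      List.nodup_nil, not_false_eq_true, and_true]
    exact ⟨⟨n13, n14, n16, n15⟩, ⟨n34, n36, n35⟩, ⟨n46, n45⟩, Ne.symm n56⟩
  by_cases e3 : fad = t
  · refine ⟨a, d, e3 ▸ ma3, e3 ▸ md1, b, c, had, hab, hac, Ne.symm hbd, Ne.symm hcd, hbc,
      fab, fac, fbd, fcd, fbc,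
      mem _ h1 (e3 ▸ n13), mem _ h2 (e3 ▸ n23),
      mem _ h5 (e3 ▸ Ne.symm n35), mem _ h6 (e3 ▸ Ne.symm n36),
      mem _ h4 (e3 ▸ Ne.symm n34), ?_,
      ma1, mb1, ma2, mc1, md2, mb3, md3, mc3, mb2, mc2⟩
    simp only [List.nodup_cons, List.mem_cons, List.not_mem_nil, or_false, not_or,
      List.nodup_nil, not_false_eq_true, and_true]
    exact ⟨⟨n12, n15, n16, n14⟩, ⟨n25, n26, n24⟩, ⟨n56, Ne.symm n45⟩, Ne.symm n46⟩
  by_cases e4 : fbc = t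
  · refine ⟨b, c, e4 ▸ mb2, e4 ▸ mc2, a, d, hbc, Ne.symm hab, hbd, Ne.symm hac, hcd, had,
      fab, fbd, fac, fcd, fad,
      mem _ h1 (e4 ▸ n14), mem _ h5 (e4 ▸ Ne.symm n45),
      mem _ h2 (e4 ▸ n24), mem _ h6 (e4 ▸ Ne.symm n46),
      mem _ h3 (e4 ▸ n34), ?_,
      mb1, ma1, mb3, md2, mc1, ma2, mc3, md3, ma3, md1⟩
    simp only [List.nodup_cons, List.mem_cons, List.not_mem_nil, or_false, not_or,
      List.nodup_nil, not_false_eq_true, and_true]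
    exact ⟨⟨n15, n12, n16, n13⟩, ⟨Ne.symm n25, n56, Ne.symm n35⟩, ⟨n26, n23⟩, Ne.symm n36⟩
  by_cases e5 : fbd = t
  · refine ⟨b, d, e5 ▸ mb3, e5 ▸ md2, a, c, hbd, Ne.symm hab, hbc, Ne.symm had, Ne.symm hcd, hac,
      fab, fbc, fad, fcd, fac,
      mem _ h1 (e5 ▸ n15), mem _ h4 (e5 ▸ n45),
      mem _ h3 (e5 ▸ n35), mem _ h6 (e5 ▸ Ne.symm n56),
      mem _ h2 (e5 ▸ n25), ?_,
      mb1, ma1, mb2, mc2, md1, ma3, md3, mc3, ma2, mc1⟩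
    simp only [List.nodup_cons, List.mem_cons, List.not_mem_nil, or_false, not_or,
      List.nodup_nil, not_false_eq_true, and_true]
    exact ⟨⟨n14, n13, n16, n12⟩, ⟨Ne.symm n34, n46, Ne.symm n24⟩, ⟨n36, Ne.symm n23⟩, Ne.symm n26⟩
  by_cases e6 : fcd = t
  · refine ⟨c, d, e6 ▸ mc3, e6 ▸ md3, a, b, hcd, Ne.symm hac, Ne.symm hbc, Ne.symm had, Ne.symm hbd, hab,
      fac, fbc, fad, fbd, fab,
      mem _ h2 (e6 ▸ n26), mem _ h4 (e6 ▸ n46),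
      mem _ h3 (e6 ▸ n36), mem _ h5 (e6 ▸ n56),
      mem _ h1 (e6 ▸ n16), ?_,
      mc1, ma2, mc2, mb2, md1, ma3, md2, mb3, ma1, mb1⟩
    simp only [List.nodup_cons, List.mem_cons, List.not_mem_nil, or_false, not_or,
      List.nodup_nil, not_false_eq_true, and_true]
    exact ⟨⟨n24, n23, n25, Ne.symm n12⟩, ⟨Ne.symm n34, n45, Ne.symm n14⟩,
      ⟨n35, Ne.symm n13⟩, Ne.symm n15⟩
  exact absurd ⟨a, b, c, d, hab, hac, had, hbc, hbd, hcd, fab, fac, fad, fbc, fbd, fcd,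
    mem _ h1 e1, mem _ h2 e2, mem _ h3 e3, mem _ h4 e4, mem _ h5 e5, mem _ h6 e6,
    hnd0, ma1, mb1, ma2, mc1, ma3, md1, mb2, mc2, mb3, md2, mc3, md3⟩ hfree

lemma no_goodpair {E : Finset (Finset V)} {v q : V} {e f : Finset V}
    (heE : e ∈ E)
    (hdich : ∀ g ∈ E, v ∈ g → g = e ∨ g = f)
    (hall : ∀ w ∈ e, hdeg E w = 2)
    (hgp : GoodPair E v q) : False := by
  obtain ⟨x, y, hvq, hvx, hvy, hqx, hqy, hxy, eux, euy, evx, evy, exy,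
    h1, h2, h3, h4, h5, hnd, m1, m2, m3, m4, m5, m6, m7, m8, m9, m10⟩ := hgp
  simp only [List.nodup_cons, List.mem_cons, List.not_mem_nil, or_false, not_or,
    List.nodup_nil, not_false_eq_true, and_true] at hnd
  obtain ⟨⟨n12, n13, n14, n15⟩, ⟨n23, n24, n25⟩, ⟨n34, n35⟩, n45⟩ := hnd
  have key : ∀ z : V, z ∈ e → ∀ g1 g2 : Finset V, g1 ∈ E → g2 ∈ E → z ∈ g1 → z ∈ g2 →
      g1 ≠ g2 → g1 ≠ e → g2 ≠ e → False := by
    intro z hz g1 g2 hg1 hg2 hz1 hz2 h12 h1e h2e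
    have hsub : ({e, g1, g2} : Finset (Finset V)) ⊆ E.filter (fun g => z ∈ g) := by
      intro g hg
      simp only [Finset.mem_insert, Finset.mem_singleton] at hg
      rcases hg with rfl | rfl | rfl <;> exact Finset.mem_filter.mpr ⟨by assumption, by assumption⟩
    have hc3 : ({e, g1, g2} : Finset (Finset V)).card = 3 := by
      rw [Finset.card_insert_of_notMem (by simp [Ne.symm h1e, Ne.symm h2e]),
        Finset.card_insert_of_notMem (by simp [h12]), Finset.card_singleton]
    have hle := Finset.card_le_card hsub
    have h2' : (E.filter (fun g => z ∈ g)).card = 2 := hall z hz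
    omega
  rcases hdich eux h1 m1 with rfl | hf1
  · exact key x m2 evx exy h3 h5 m6 m9 n35 (Ne.symm n13) (Ne.symm n15)
  · rcases hdich euy h2 m3 with rfl | hf2
    · exact key y m4 evy exy h4 h5 m8 m10 n45 (Ne.symm n24) (Ne.symm n25)
    · exact n12 (hf1.trans hf2.symm)

lemma key_dich {E : Finset (Finset V)} {e : Finset V} {z : V}
    (heE : e ∈ E) (hze : z ∈ e) (hd : hdeg E z = 2) :
    ∃ f, ∀ g ∈ E, z ∈ g → g = e ∨ g = f := by
  have hd' : (E.filter (fun g => z ∈ g)).card = 2 := hd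
  obtain ⟨g1, g2, hg12, hfe⟩ := Finset.card_eq_two.mp hd'
  have hez : e ∈ E.filter (fun g => z ∈ g) := Finset.mem_filter.mpr ⟨heE, hze⟩
  rw [hfe] at hez
  simp only [Finset.mem_insert, Finset.mem_singleton] at hez
  rcases hez with rfl | rfl
  · refine ⟨g2, fun g hg hzg => ?_⟩
    have hm : g ∈ E.filter (fun g => z ∈ g) := Finset.mem_filter.mpr ⟨hg, hzg⟩
    rw [hfe] at hm
    simpa using hm
  · refine ⟨g1, fun g hg hzg => ?_⟩
    have hm : g ∈ E.filter (fun g => z ∈ g) := Finset.mem_filter.mpr ⟨hg, hzg⟩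
    rw [hfe] at hm
    simp only [Finset.mem_insert, Finset.mem_singleton] at hm
    tauto

lemma key_mem [Fintype V] {E : Finset (Finset V)} {e : Finset V}
    (hsat : IsSaturated E) (heE : e ∈ E)
    (hall : ∀ w ∈ e, hdeg E w = 2)
    {w w' u : V} (hw : w ∈ e) (hw' : w' ∈ e) (hww' : w ≠ w') (hu : u ∉ e) :
    ({w, w', u} : Finset V) ∈ E := by
  by_contra ht
  have hwu : w ≠ u := fun h => hu (h ▸ hw)
  have hw'u : w' ≠ u := fun h => hu (h ▸ hw')
  have hcard : ({w, w', u} : Finset V).card = 3 := by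
    rw [Finset.card_insert_of_notMem (by simp [hww', hwu]),
      Finset.card_insert_of_notMem (by simp [hw'u]), Finset.card_singleton]
  obtain ⟨p, q, hp, hq, hgp⟩ := exists_goodpair hsat.2.1 (hsat.2.2 _ hcard ht)
  have hpq : p ≠ q := by obtain ⟨x, y, h, -⟩ := hgp; exact h
  have hz : ∃ z, z ∈ e ∧ (GoodPair E z q ∨ GoodPair E p z) := by
    simp only [Finset.mem_insert, Finset.mem_singleton] at hp hq
    rcases hp with rfl | rfl | rfl
    · exact ⟨p, hw, Or.inl hgp⟩
    · exact ⟨p, hw', Or.inl hgp⟩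
    · rcases hq with rfl | rfl | rfl
      · exact ⟨q, hw, Or.inr hgp⟩
      · exact ⟨q, hw', Or.inr hgp⟩
      · exact absurd rfl hpq
  obtain ⟨z, hze, hgp'⟩ := hz
  obtain ⟨f, hdich⟩ := key_dich heE hze (hall z hze)
  rcases hgp' with h | h
  · exact no_goodpair heE hdich hall h
  · exact no_goodpair heE hdich hall (goodpair_symm h)

open scoped Classical in
theorem stmt_13 (n : ℕ) (E : Finset (Finset (Fin n)))
    (hsat : IsSaturated E) (hmin : ∀ v : Fin n, 2 ≤ hdeg E v)
    (X A B : Finset (Fin n))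
    (hX : X = Finset.univ.filter fun v => 3 ≤ hdeg E v)
    (hA : A = (Finset.univ \ X).filter fun v => ∀ e ∈ E, v ∈ e → ∃ w ∈ e, w ∈ X)
    (hB : B = Finset.univ \ (X ∪ A))
    (hdeg2 : ∀ v : Fin n, v ∉ X → hdeg E v = 2) :
    B = ∅ := by
  by_contra hne
  obtain ⟨v, hv⟩ := Finset.nonempty_iff_ne_empty.mpr hne
  rw [hB, Finset.mem_sdiff, Finset.mem_union] at hv
  push_neg at hv
  obtain ⟨-, hvX, hvA⟩ := hv
  rw [hA, Finset.mem_filter] at hvA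
  push_neg at hvA
  have hex := hvA (Finset.mem_sdiff.mpr ⟨Finset.mem_univ v, hvX⟩)
  obtain ⟨e, heE, hve, hno⟩ := hex
  have hall : ∀ w ∈ e, hdeg E w = 2 := fun w hw => hdeg2 w (hno w hw)
  have he3 : e.card = 3 := hsat.1 e heE
  -- v1 ∈ e, v1 ≠ v
  obtain ⟨v1, hv1e, hv1v⟩ := Finset.exists_mem_ne (by rw [he3]; norm_num) v
  -- v2 ∈ e, v2 ∉ {v, v1}
  have hsub2 : ({v, v1} : Finset (Fin n)) ⊆ e := by
    intro z hz
    simp only [Finset.mem_insert, Finset.mem_singleton] at hz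
    rcases hz with rfl | rfl
    exacts [hve, hv1e]
  have hcard2 : ({v, v1} : Finset (Fin n)).card = 2 := by
    rw [Finset.card_insert_of_notMem (by simp [Ne.symm hv1v]), Finset.card_singleton]
  have hsd : (e \ ({v, v1} : Finset (Fin n))).Nonempty := by
    rw [← Finset.card_pos, Finset.card_sdiff_of_subset hsub2, he3, hcard2]
    norm_num
  obtain ⟨v2, hv2⟩ := hsd
  rw [Finset.mem_sdiff] at hv2
  obtain ⟨hv2e, hv2nm⟩ := hv2
  simp only [Finset.mem_insert, Finset.mem_singleton, not_or] at hv2nm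
  obtain ⟨hv2v, hv2v1⟩ := hv2nm
  -- find u ∉ e : need 4 ≤ n
  have hdv : (E.filter (fun g => v ∈ g)).card = 2 := hall v hve
  obtain ⟨g1, g2, hg12, hfe⟩ := Finset.card_eq_two.mp hdv
  have h1m : g1 ∈ E.filter (fun g => v ∈ g) := by rw [hfe]; simp
  have h2m : g2 ∈ E.filter (fun g => v ∈ g) := by rw [hfe]; simp
  rw [Finset.mem_filter] at h1m h2m
  have hg13 : g1.card = 3 := hsat.1 _ h1m.1
  have hg23 : g2.card = 3 := hsat.1 _ h2m.1
  have hinter : (g1 ∩ g2).card ≤ 2 := by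
    by_contra h
    push_neg at h
    have hgi : g1 ∩ g2 = g1 :=
      Finset.eq_of_subset_of_card_le Finset.inter_subset_left (by omega)
    have hsub : g1 ⊆ g2 := hgi ▸ Finset.inter_subset_right
    exact hg12 (Finset.eq_of_subset_of_card_le hsub (by omega))
  have hun := Finset.card_union_add_card_inter g1 g2
  have hun4 : 4 ≤ (g1 ∪ g2).card := by omega
  have hnn : 4 ≤ n := by
    have hle := Finset.card_le_card (Finset.subset_univ (g1 ∪ g2))
    rw [Finset.card_univ, Fintype.card_fin] at hle
    omega
  have hue : (Finset.univ \ e).Nonempty := by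
    rw [← Finset.card_pos, Finset.card_sdiff_of_subset (Finset.subset_univ e),
      Finset.card_univ, Fintype.card_fin, he3]
    omega
  obtain ⟨u, hu⟩ := hue
  have hue' : u ∉ e := (Finset.mem_sdiff.mp hu).2
  -- both triples are edges
  have ht1 : ({v, v1, u} : Finset (Fin n)) ∈ E :=
    key_mem hsat heE hall hve hv1e (Ne.symm hv1v) hue'
  have ht2 : ({v, v2, u} : Finset (Fin n)) ∈ E :=
    key_mem hsat heE hall hve hv2e (Ne.symm hv2v) hue'
  -- three distinct edges containing v contradict degree 2
  have hne1 : ({v, v1, u} : Finset (Fin n)) ≠ e := fun h => hue' (h ▸ (by simp))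
  have hne2 : ({v, v2, u} : Finset (Fin n)) ≠ e := fun h => hue' (h ▸ (by simp))
  have hv1u : v1 ≠ u := fun h => hue' (h ▸ hv1e)
  have hne12 : ({v, v1, u} : Finset (Fin n)) ≠ ({v, v2, u} : Finset (Fin n)) := by
    intro h
    have hm : v1 ∈ ({v, v2, u} : Finset (Fin n)) := h ▸ (by simp)
    simp only [Finset.mem_insert, Finset.mem_singleton] at hm
    rcases hm with h' | h' | h'
    · exact hv1v h'
    · exact hv2v1 h'.symm
    · exact hv1u h'
  have hsub3 : ({e, {v, v1, u}, {v, v2, u}} : Finset (Finset (Fin n))) ⊆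
      E.filter (fun g => v ∈ g) := by
    intro g hg
    simp only [Finset.mem_insert, Finset.mem_singleton] at hg
    rcases hg with rfl | rfl | rfl
    · exact Finset.mem_filter.mpr ⟨heE, hve⟩
    · exact Finset.mem_filter.mpr ⟨ht1, by simp⟩
    · exact Finset.mem_filter.mpr ⟨ht2, by simp⟩
  have hc3 : ({e, {v, v1, u}, {v, v2, u}} : Finset (Finset (Fin n))).card = 3 := by
    rw [Finset.card_insert_of_notMem (by simp [Ne.symm hne1, Ne.symm hne2]),
      Finset.card_insert_of_notMem (by simp [hne12]), Finset.card_singleton]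
  have hle := Finset.card_le_card hsub3
  rw [hc3, hdv] at hle
  omega
end
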